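/- arXiv:cond-mat/0111293 — 7 statements merged into one kernel-verified Lean document; each statement's English description precedes it below -/
import Mathlib

section
/- For the zero-temperature majority dynamics on the hexagonal lattice (a spin flips if and only if it disagrees with the strict majority of its three neighbors), a site whose spin agrees with all sites of a fixed simple cycle of constant sign containing it never flips at any later time: the constant-sign cycle is stable under the dynamics. -/
open MeasureTheory

/-- Vertices of the hexagonal (honeycomb) lattice: two sites per unit cell of `ℤ × ℤ`. -/
abbrev Hex := ℤ × ℤ × Bool

/-- Base adjacency relation generating the hexagonal lattice: the `A`-site (`false`) of cell
`(i,j)` is adjacent to the `B`-sites (`true`) of cells `(i,j)`, `(i-1,j)`, `(i,j-1)`. -/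
def hexRel (u v : Hex) : Prop :=
  u.2.2 = false ∧ v.2.2 = true ∧
    ((v.1, v.2.1) = (u.1, u.2.1) ∨ (v.1, v.2.1) = (u.1 - 1, u.2.1) ∨
      (v.1, v.2.1) = (u.1, u.2.1 - 1))

/-- The hexagonal lattice as a simple graph; every vertex has degree 3. -/
def HexGraph : SimpleGraph Hex := SimpleGraph.fromRel hexRel

/-- Membership in the sublattice `A`. -/
def isA (v : Hex) : Prop := v.2.2 = false

/-- Membership in the sublattice `B`. -/
def isB (v : Hex) : Prop := v.2.2 = true

/-- Adjacency of two `B`-sites (graph distance 2 in `H`, via a common `A`-neighbor);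
this makes `B` a triangular lattice. -/
def Badj (y y' : Hex) : Prop :=
  isB y ∧ isB y' ∧ y ≠ y' ∧ ∃ z, isA z ∧ HexGraph.Adj y z ∧ HexGraph.Adj z y'

/-- The triangular lattice as a graph on `ℤ × ℤ` (each vertex has 6 neighbors). -/
def triRel (u v : ℤ × ℤ) : Prop :=
  (v.1 - u.1, v.2 - u.2) ∈ ({(1, 0), (0, 1), (1, -1)} : Set (ℤ × ℤ))

def TriGraph : SimpleGraph (ℤ × ℤ) := SimpleGraph.fromRel triRel

/-- The three `H`-neighbors of a hexagonal-lattice site. -/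
def nbrsT : Hex → Hex × Hex × Hex
  | (i, j, true) => ((i, j, false), (i + 1, j, false), (i, j + 1, false))
  | (i, j, false) => ((i, j, true), (i - 1, j, true), (i, j - 1, true))

/-- The majority of the spins of the three neighbors of `x`; a spin flips iff it disagrees
with at least two of its three neighbors, i.e. the updated value is this majority. -/
def majAt (σ : Hex → Bool) (x : Hex) : Bool :=
  let n := nbrsT x
  (σ n.1 && σ n.2.1) || (σ n.1 && σ n.2.2) || (σ n.2.1 && σ n.2.2)

/-- Update of the sublattice `A`. -/
def updA (σ : Hex → Bool) : Hex → Bool := fun x =>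
  if x.2.2 = false then majAt σ x else σ x

/-- Update of the sublattice `B`. -/
def updB (σ : Hex → Bool) : Hex → Bool := fun x =>
  if x.2.2 = true then majAt σ x else σ x

/-- The zero-temperature alternating-sublattice majority dynamics: `A` is updated at odd
times, `B` at even times. -/
def evolve (σ0 : Hex → Bool) : ℕ → Hex → Bool
  | 0 => σ0
  | n + 1 => if (n + 1) % 2 = 1 then updA (evolve σ0 n) else updB (evolve σ0 n)

/-- `z` is the common `A`-neighbor linking the (B-adjacent) pair `p`. -/
def IsLink (p : Hex × Hex) (z : Hex) : Prop :=
  isA z ∧ HexGraph.Adj p.1 z ∧ HexGraph.Adj z p.2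

/-- A (site-self-avoiding) path in the triangular sublattice `B`. -/
def IsPathB (l : List Hex) : Prop :=
  (∀ y ∈ l, isB y) ∧ l.Chain' Badj ∧ l.Nodup

/-- An s-path: a path in `B` whose consecutive-pair common `A`-neighbors are all distinct. -/
def IsSPath (l : List Hex) : Prop :=
  IsPathB l ∧ ∃ zs : List Hex, List.Forall₂ IsLink (l.zip l.tail) zs ∧ zs.Nodup

/-- A simple loop in the triangular sublattice `B`, recorded by its (distinct) sites. -/
def IsLoopB (l : List Hex) : Prop :=
  (∀ y ∈ l, isB y) ∧ l.Nodup ∧ 3 ≤ l.length ∧ (l ++ l.take 1).Chain' Badj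

/-- An s-loop: a loop in `B` whose consecutive-pair common `A`-neighbors are all distinct. -/
def IsSLoop (l : List Hex) : Prop :=
  IsLoopB l ∧ ∃ zs : List Hex,
    List.Forall₂ IsLink ((l ++ l.take 1).zip (l ++ l.take 1).tail) zs ∧ zs.Nodup

/-- A star: a triangle in `B` whose three sites have a common `A`-neighbor. -/
def IsStar (a b c : Hex) : Prop :=
  Badj a b ∧ Badj b c ∧ Badj c a ∧
    ∃ z, isA z ∧ HexGraph.Adj a z ∧ HexGraph.Adj b z ∧ HexGraph.Adj c z

/-- An antistar: a triangle in `B` whose three sites have no common `A`-neighbor. -/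
def IsAntistarSet (t : Finset Hex) : Prop :=
  ∃ a b c : Hex, t = {a, b, c} ∧ Badj a b ∧ Badj b c ∧ Badj c a ∧
    ¬ ∃ z, isA z ∧ HexGraph.Adj a z ∧ HexGraph.Adj b z ∧ HexGraph.Adj c z

/-- The partial cluster `C_{(x,x')}`: sites of `B` reachable from `x'` by a self-avoiding
path of constant `σ`-sign whose first step avoids `x` and does not form a star with `x`. -/
def partialCluster (σ : Hex → Bool) (x x' : Hex) : Set Hex :=
  {y | ∃ l : List Hex, IsPathB l ∧ (∀ w ∈ l, σ w = σ x') ∧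
        l.head? = some x' ∧ l.getLast? = some y ∧
        ∀ h : 1 < l.length, l.get ⟨1, h⟩ ≠ x ∧ ¬ IsStar x' (l.get ⟨1, h⟩) x}

/-- The open cluster of `x0` (for `σ`-open sites) in the triangular sublattice `B`. -/
def openCluster (σ : Hex → Bool) (x0 : Hex) : Set Hex :=
  {y | ∃ l : List Hex, IsPathB l ∧ (∀ w ∈ l, σ w = true) ∧
        l.head? = some x0 ∧ l.getLast? = some y}

/-- A barbell: two vertex-disjoint simple cycles connected by a path (a single simple cycle
being a degenerate barbell), recorded as its set of sites. -/
def IsBarbell (S : Set Hex) : Prop :=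
  (∃ (u : Hex) (c : HexGraph.Walk u u), c.IsCycle ∧ S = {x | x ∈ c.support}) ∨
  (∃ (u v w1 w2 : Hex) (c1 : HexGraph.Walk u u) (c2 : HexGraph.Walk v v)
      (p : HexGraph.Walk w1 w2), c1.IsCycle ∧ c2.IsCycle ∧
      Disjoint {x | x ∈ c1.support} {x | x ∈ c2.support} ∧ p.IsPath ∧
      w1 ∈ c1.support ∧ w2 ∈ c2.support ∧
      S = {x | x ∈ c1.support} ∪ {x | x ∈ c2.support} ∪ {x | x ∈ p.support})

/-- Standard planar embedding of the triangular lattice (unit mesh). -/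
noncomputable def embT (p : ℤ × ℤ) : ℝ × ℝ :=
  ((p.1 : ℝ) + (p.2 : ℝ) / 2, (p.2 : ℝ) * Real.sqrt 3 / 2)

/-- Planar embedding of the hexagonal lattice: `B`-sites at triangular-lattice points,
`A`-sites at the centroids of their three `B`-neighbors. -/
noncomputable def embH (v : Hex) : ℝ × ℝ :=
  if v.2.2 then embT (v.1, v.2.1)
  else (((embT (v.1, v.2.1)).1 + (embT (v.1 - 1, v.2.1)).1 + (embT (v.1, v.2.1 - 1)).1) / 3,
        ((embT (v.1, v.2.1)).2 + (embT (v.1 - 1, v.2.1)).2 + (embT (v.1, v.2.1 - 1)).2) / 3)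

/-- The open rectangle `(-a/2, a/2) × (-b/2, b/2)`. -/
def rectR (a b : ℝ) : Set (ℝ × ℝ) := Set.Ioo (-a / 2) (a / 2) ×ˢ Set.Ioo (-b / 2) (b / 2)

def topSide (a b : ℝ) : Set (ℝ × ℝ) := Set.Icc (-a / 2) (a / 2) ×ˢ ({b / 2} : Set ℝ)
def bottomSide (a b : ℝ) : Set (ℝ × ℝ) := Set.Icc (-a / 2) (a / 2) ×ˢ ({-b / 2} : Set ℝ)
def leftSide (a b : ℝ) : Set (ℝ × ℝ) := ({-a / 2} : Set ℝ) ×ˢ Set.Icc (-b / 2) (b / 2)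
def rightSide (a b : ℝ) : Set (ℝ × ℝ) := ({a / 2} : Set ℝ) ×ˢ Set.Icc (-b / 2) (b / 2)

/-- A lattice crossing of a region, following the paper: a path `x_0, …, x_{m+1}` of good
sites, with `δ x_1, …, δ x_m` inside the region, the segment from `δ x_0` to `δ x_1`
touching the starting side and the segment from `δ x_m` to `δ x_{m+1}` touching the
ending side. -/
def LatticeCrossing {α : Type*} (Adj : α → α → Prop) (good : α → Prop) (e : α → ℝ × ℝ)
    (δ : ℝ) (inside startSide endSide : Set (ℝ × ℝ)) : Prop :=
  ∃ (m : ℕ) (f : ℕ → α), 1 ≤ m ∧ (∀ i ≤ m, Adj (f i) (f (i + 1))) ∧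
    (∀ i ≤ m + 1, good (f i)) ∧
    (∀ i, 1 ≤ i → i ≤ m → δ • e (f i) ∈ inside) ∧
    (segment ℝ (δ • e (f 0)) (δ • e (f 1)) ∩ startSide).Nonempty ∧
    (segment ℝ (δ • e (f m)) (δ • e (f (m + 1))) ∩ endSide).Nonempty

/-- Vertical plus-crossing of the rectangle `R(a,b)` in the mesh-`δ` hexagonal lattice. -/
def VPlusCrossHex (σ : Hex → Bool) (δ a b : ℝ) : Prop :=
  LatticeCrossing HexGraph.Adj (fun v => σ v = true) embH δ (rectR a b) (topSide a b)
    (bottomSide a b)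

/-- Horizontal minus-crossing of `R(a,b)` in the mesh-`δ` hexagonal lattice. -/
def HMinusCrossHex (σ : Hex → Bool) (δ a b : ℝ) : Prop :=
  LatticeCrossing HexGraph.Adj (fun v => σ v = false) embH δ (rectR a b) (leftSide a b)
    (rightSide a b)

/-- Horizontal minus-crossing of `R(a,b)` in the mesh-`δ` triangular sublattice `B`. -/
def HMinusCrossB (σ : Hex → Bool) (δ a b : ℝ) : Prop :=
  LatticeCrossing Badj (fun v => σ v = false) embH δ (rectR a b) (leftSide a b)
    (rightSide a b)

/-- Vertical plus-crossing of `R(a,b)` in the mesh-`δ` sublattice `B` realized by an s-path. -/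
def SPathVPlusCrossB (σ : Hex → Bool) (δ a b : ℝ) : Prop :=
  ∃ (m : ℕ) (f : ℕ → Hex), 1 ≤ m ∧
    IsSPath (List.ofFn fun i : Fin (m + 2) => f i) ∧
    (∀ i ≤ m + 1, σ (f i) = true) ∧
    (∀ i, 1 ≤ i → i ≤ m → δ • embH (f i) ∈ rectR a b) ∧
    (segment ℝ (δ • embH (f 0)) (δ • embH (f 1)) ∩ topSide a b).Nonempty ∧
    (segment ℝ (δ • embH (f m)) (δ • embH (f (m + 1))) ∩ bottomSide a b).Nonempty

/-- The six triangular-lattice neighbors of a site. -/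
def triNbrs (p : ℤ × ℤ) : List (ℤ × ℤ) :=
  [(p.1 + 1, p.2), (p.1 - 1, p.2), (p.1, p.2 + 1), (p.1, p.2 - 1),
    (p.1 + 1, p.2 - 1), (p.1 - 1, p.2 + 1)]

/-- One step of the deterministic cellular automaton on the triangular lattice: the spin
at `p` flips iff at least two of its three designated neighbor-pairs are monochromatic
of the opposite sign. -/
def autoStep (τ : ℤ × ℤ → Bool) (p : ℤ × ℤ) : Bool :=
  let v := τ p
  let q1 := (τ (p.1 - 1, p.2) == !v) && (τ (p.1, p.2 - 1) == !v)
  let q2 := (τ (p.1 + 1, p.2) == !v) && (τ (p.1 + 1, p.2 - 1) == !v)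
  let q3 := (τ (p.1 - 1, p.2 + 1) == !v) && (τ (p.1, p.2 + 1) == !v)
  cond ((q1 && q2) || (q1 && q3) || (q2 && q3)) (!v) v

/-- The automaton dynamics on the triangular lattice. -/
def autoEvolve (τ0 : ℤ × ℤ → Bool) : ℕ → ℤ × ℤ → Bool
  | 0 => τ0
  | m + 1 => autoStep (autoEvolve τ0 m)

/-- The Gauss hypergeometric function `₂F₁`, as a power series. -/
noncomputable def hyp2F1 (a b c x : ℝ) : ℝ :=
  ∑' n : ℕ, ((ascPochhammer ℝ n).eval a * (ascPochhammer ℝ n).eval b /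
    (ascPochhammer ℝ n).eval c) * x ^ n / (n.factorial : ℝ)

/-- Cardy's formula `F_C(η)`. -/
noncomputable def cardyF (η : ℝ) : ℝ :=
  (Real.Gamma (2 / 3) / (Real.Gamma (4 / 3) * Real.Gamma (1 / 3))) * η ^ ((1 : ℝ) / 3) *
    hyp2F1 (1 / 3) (2 / 3) (4 / 3) η

section CycleStableAux

open SimpleGraph

private lemma walk_support_getElem? {V : Type*} {G : SimpleGraph V} {u v : V}
    (p : G.Walk u v) (i : ℕ) (h : i ≤ p.length) :
    p.support[i]? = some (p.getVert i) := by
  induction p generalizing i with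
  | nil => simp_all [Nat.le_zero.mp h]
  | cons hadj q ih =>
    cases i with
    | zero => simp
    | succ n =>
      simp only [Walk.support_cons, Walk.length_cons] at *
      rw [List.getElem?_cons_succ, ih n (by omega)]
      rfl

private lemma cycle_two_nbrs_start {V : Type*} [DecidableEq V] {G : SimpleGraph V}
    {u : V} {c : G.Walk u u} (hc : c.IsCycle) :
    ∃ y z, y ≠ z ∧ G.Adj u y ∧ G.Adj u z ∧ y ∈ c.support ∧ z ∈ c.support := by
  have hlen := hc.three_le_length
  refine ⟨c.getVert 1, c.getVert (c.length - 1), ?_, ?_, ?_, ?_, ?_⟩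
  · intro heq
    have hnd : c.support.tail.Nodup := hc.2
    have h1 : c.support.tail[0]? = some (c.getVert 1) := by
      rw [List.getElem?_tail]
      exact walk_support_getElem? _ 1 (by omega)
    have h2 : c.support.tail[c.length - 2]? = some (c.getVert (c.length - 1)) := by
      rw [List.getElem?_tail]
      have he : c.length - 2 + 1 = c.length - 1 := by omega
      rw [he]
      exact walk_support_getElem? _ _ (by omega)
    have heq2 : c.support.tail[0]? = c.support.tail[c.length - 2]? := by
      rw [h1, h2, heq]
    have hlt : c.support.tail.length = c.length := by
      simp [List.length_tail, Walk.length_support]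
    have h0 : (0 : ℕ) < c.support.tail.length := by omega
    have h0' : c.length - 2 < c.support.tail.length := by omega
    have hg : c.support.tail[0]'h0 = c.support.tail[c.length - 2]'h0' := by
      apply Option.some_injective
      rw [← List.getElem?_eq_getElem h0, ← List.getElem?_eq_getElem h0', heq2]
    have := hnd.getElem_inj_iff.mp hg
    omega
  · have := c.adj_getVert_succ (i := 0) (by omega)
    simpa using this
  · have := c.adj_getVert_succ (i := c.length - 1) (by omega)
    have he : c.length - 1 + 1 = c.length := by omega
    rw [he, c.getVert_length] at this
    exact this.symm
  · exact Walk.mem_support_iff_exists_getVert.mpr ⟨1, rfl, by omega⟩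
  · exact Walk.mem_support_iff_exists_getVert.mpr ⟨c.length - 1, rfl, by omega⟩

private lemma cycle_two_nbrs {V : Type*} [DecidableEq V] {G : SimpleGraph V}
    {u x : V} {c : G.Walk u u} (hc : c.IsCycle) (hx : x ∈ c.support) :
    ∃ y z, y ≠ z ∧ G.Adj x y ∧ G.Adj x z ∧ y ∈ c.support ∧ z ∈ c.support := by
  obtain ⟨y, z, hyz, hay, haz, hy, hz⟩ := cycle_two_nbrs_start (hc.rotate hx)
  have hrot := Walk.support_rotate c x hx
  have hsub : ∀ w, w ∈ (c.rotate x hx).support → w ∈ c.support := by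
    intro w hw
    rw [Walk.support_eq_cons, List.mem_cons] at hw
    rcases hw with rfl | hw
    · exact hx
    · exact List.mem_of_mem_tail (hrot.mem_iff.mp hw)
  exact ⟨y, z, hyz, hay, haz, hsub y hy, hsub z hz⟩

private lemma adj_mem_nbrs {x y : Hex} (h : HexGraph.Adj x y) :
    y = (nbrsT x).1 ∨ y = (nbrsT x).2.1 ∨ y = (nbrsT x).2.2 := by
  obtain ⟨i, j, b⟩ := x
  obtain ⟨k, l, c⟩ := y
  obtain ⟨hne, h | h⟩ := h <;>
    obtain ⟨h1, h2, h3 | h3 | h3⟩ := h <;>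
    cases b <;> cases c <;> simp_all [nbrsT, Prod.ext_iff]

private lemma majAt_eq_of_two {σ : Hex → Bool} {x : Hex} {s : Bool} {y z : Hex}
    (hyz : y ≠ z)
    (hy : y = (nbrsT x).1 ∨ y = (nbrsT x).2.1 ∨ y = (nbrsT x).2.2)
    (hz : z = (nbrsT x).1 ∨ z = (nbrsT x).2.1 ∨ z = (nbrsT x).2.2)
    (hsy : σ y = s) (hsz : σ z = s) : majAt σ x = s := by
  unfold majAt
  rcases hy with rfl | rfl | rfl <;> rcases hz with rfl | rfl | rfl <;>
    first
      | exact absurd rfl hyz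
      | (cases s <;> simp_all)

end CycleStableAux

/-- a simple cycle of constant sign in the hexagonal lattice is stable:
every site on it keeps its sign at all later times of the dynamics. -/
theorem cycle_stable (σ0 : Hex → Bool) (u : Hex) (c : HexGraph.Walk u u)
    (hc : c.IsCycle) (s : Bool) (n0 : ℕ)
    (hconst : ∀ x ∈ c.support, evolve σ0 n0 x = s) :
    ∀ n, n0 ≤ n → ∀ x ∈ c.support, evolve σ0 n x = s := by
  intro n hn
  induction n, hn using Nat.le_induction with
  | base => exact hconst
  | succ n hn ih =>
    intro x hx
    have hmaj : majAt (evolve σ0 n) x = s := by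
      obtain ⟨y, z, hyz, hay, haz, hy, hz⟩ := cycle_two_nbrs hc hx
      exact majAt_eq_of_two hyz (adj_mem_nbrs hay) (adj_mem_nbrs haz) (ih y hy) (ih z hz)
    have hxs : evolve σ0 n x = s := ih x hx
    show (if (n + 1) % 2 = 1 then updA (evolve σ0 n) else updB (evolve σ0 n)) x = s
    unfold updA updB
    split <;> (simp only []; split <;> simp_all)
end

section
/- Any path in the triangular sublattice B between sites y and y' contains (as a subset of its sites) an s-path between y and y'. -/
open MeasureTheory

open Classical in
noncomputable def linkOf (p : Hex × Hex) : Hex :=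
  if h : Badj p.1 p.2 then h.2.2.2.choose else p.1

lemma linkOf_isLink {p : Hex × Hex} (h : Badj p.1 p.2) : IsLink p (linkOf p) := by
  unfold linkOf
  rw [dif_pos h]
  obtain ⟨hA, h1, h2⟩ := h.2.2.2.choose_spec
  exact ⟨hA, h1, h2⟩

lemma chain'_zip_tail {α : Type*} {R : α → α → Prop} :
    ∀ {l : List α}, l.Chain' R → ∀ p ∈ l.zip l.tail, R p.1 p.2
  | [] => by simp
  | [a] => by simp
  | a :: b :: t => by
    intro h p hp
    unfold List.Chain' at h
    rw [List.isChain_cons_cons] at h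
    simp only [List.tail_cons, List.zip_cons_cons, List.mem_cons] at hp
    rcases hp with rfl | hp
    · exact h.1
    · exact chain'_zip_tail h.2 p hp

lemma path_contains_spath_aux : ∀ n : ℕ, ∀ l : List Hex, l.length ≤ n → IsPathB l → l ≠ [] →
    ∃ l' : List Hex, IsSPath l' ∧ l'.head? = l.head? ∧ l'.getLast? = l.getLast? ∧
      ∀ x ∈ l', x ∈ l := by
  intro n
  induction n with
  | zero =>
    intro l hn _ hne
    rw [Nat.le_zero, List.length_eq_zero_iff] at hn
    exact absurd hn hne
  | succ n ih =>
    intro l hn hl hne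
    have hN : 0 < l.length := List.length_pos_iff.mpr hne
    set zs := (l.zip l.tail).map linkOf with hzs
    have hF : List.Forall₂ IsLink (l.zip l.tail) zs := by
      rw [hzs, List.forall₂_map_right_iff, List.forall₂_same]
      intro p hp
      exact linkOf_isLink (chain'_zip_tail hl.2.1 p hp)
    by_cases hnd : zs.Nodup
    · exact ⟨l, ⟨hl, zs, hF, hnd⟩, rfl, rfl, fun x hx => hx⟩
    · rw [List.nodup_iff_injective_get] at hnd
      obtain ⟨a, b, hab, hne2⟩ := Function.not_injective_iff.mp hnd
      obtain ⟨i, j, hlt, heq⟩ : ∃ i j : Fin zs.length, i < j ∧ zs.get i = zs.get j := by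
        rcases hne2.lt_or_gt with h | h
        · exact ⟨a, b, h, hab⟩
        · exact ⟨b, a, h, hab.symm⟩
      have hzlen : zs.length = l.length - 1 := by
        simp [hzs, List.length_zip, List.length_tail]
      have hij : (i : ℕ) < (j : ℕ) := hlt
      have hjb : (j : ℕ) < l.length - 1 := by have := j.2; omega
      have hi1 : (i : ℕ) + 1 < l.length := by have := i.2; omega
      have hj1 : (j : ℕ) + 1 < l.length := by omega
      have hiN : (i : ℕ) < l.length := by omega
      have hjN : (j : ℕ) < l.length := by omega
      -- extract the IsLink facts at indices i and j
      have hget := (List.forall₂_iff_get.mp hF).2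
      have hzipi : ∀ (k : ℕ) (hk1 : k + 1 < l.length) (hk : k < (l.zip l.tail).length),
          (l.zip l.tail).get ⟨k, hk⟩ = (l[k]'(Nat.lt_of_succ_lt hk1), l[k + 1]'hk1) := by
        intro k hk1 hk
        have ht : k < l.tail.length := by rw [List.length_tail]; omega
        simp only [List.get_eq_getElem, List.getElem_zip]
        rw [List.getElem_tail]
      have hzli : (l.zip l.tail).length = zs.length := by
        simp [hzs]
      have h1 : IsLink (l[(i : ℕ)]'hiN, l[(i : ℕ) + 1]'hi1) (zs.get i) := by
        have := hget (i : ℕ) (by omega) i.2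
        rwa [hzipi (i : ℕ) hi1] at this
      have h2 : IsLink (l[(j : ℕ)]'hjN, l[(j : ℕ) + 1]'hj1) (zs.get i) := by
        have := hget (j : ℕ) (by omega) j.2
        rw [hzipi (j : ℕ) hj1] at this
        rwa [heq]
      have hBadj : Badj (l[(i : ℕ)]'hiN) (l[(j : ℕ) + 1]'hj1) := by
        refine ⟨hl.1 _ (List.getElem_mem _), hl.1 _ (List.getElem_mem _), ?_,
          zs.get i, h1.1, h1.2.1, h2.2.2⟩
        intro hcon
        rw [hl.2.2.getElem_inj_iff] at hcon
        omega
      -- the shortcut list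
      set l2 := l.take ((i : ℕ) + 1) ++ l.drop ((j : ℕ) + 1) with hl2
      have hdd : l.drop ((j : ℕ) + 1) = (l.drop ((i : ℕ) + 1)).drop ((j : ℕ) - (i : ℕ)) := by
        rw [List.drop_drop]
        congr 1
        omega
      have hsub : List.Sublist l2 l := by
        have h0 : List.Sublist (l.drop ((j : ℕ) + 1)) (l.drop ((i : ℕ) + 1)) := by
          rw [hdd]; exact List.drop_sublist _ _
        have := h0.append_left (l.take ((i : ℕ) + 1))
        rwa [List.take_append_drop] at this
      have htlen : (l.take ((i : ℕ) + 1)).length = (i : ℕ) + 1 := by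
        rw [List.length_take]; omega
      have hlast_take : (l.take ((i : ℕ) + 1)).getLast? = some (l[(i : ℕ)]'hiN) := by
        rw [List.getLast?_eq_getElem?, htlen, Nat.add_sub_cancel, List.getElem?_take,
          if_pos (Nat.lt_succ_self _), List.getElem?_eq_getElem hiN]
      have hhead_drop : (l.drop ((j : ℕ) + 1)).head? = some (l[(j : ℕ) + 1]'hj1) := by
        rw [List.head?_drop, List.getElem?_eq_getElem hj1]
      have hpath2 : IsPathB l2 := by
        refine ⟨fun y hy => hl.1 y (hsub.subset hy), ?_, hsub.nodup hl.2.2⟩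
        rw [hl2]
        unfold List.Chain'
        rw [List.isChain_append]
        refine ⟨hl.2.1.take _, hl.2.1.drop _, ?_⟩
        intro x hx y hy
        rw [hlast_take, Option.mem_some_iff] at hx
        rw [hhead_drop, Option.mem_some_iff] at hy
        rw [← hx, ← hy]
        exact hBadj
      have hl2ne : l2 ≠ [] := by
        intro hcon
        have : l2.length = 0 := by rw [hcon]; rfl
        rw [hl2, List.length_append, htlen] at this
        omega
      have hl2len : l2.length ≤ n := by
        rw [hl2, List.length_append, htlen, List.length_drop]
        omega
      obtain ⟨l', hsp, hh, hgl, hmem⟩ := ih l2 hl2len hpath2 hl2ne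
      refine ⟨l', hsp, ?_, ?_, fun x hx => hsub.subset (hmem x hx)⟩
      · rw [hh, List.head?_eq_getElem?, List.head?_eq_getElem?, hl2, List.getElem?_append,
          htlen, if_pos (by omega), List.getElem?_take, if_pos (by omega)]
      · rw [hgl, hl2, List.getLast?_append, List.getLast?_eq_getElem?,
          List.getLast?_eq_getElem? (l := l), List.length_drop, List.getElem?_drop]
        have hdl : (j : ℕ) + 1 + (l.length - ((j : ℕ) + 1) - 1) = l.length - 1 := by omega
        rw [hdl, List.getElem?_eq_getElem (by omega)]
        rfl

/-- any path in `B` between `y` and `y'` contains (as a subset of its sites)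
an s-path between `y` and `y'`. -/
theorem path_contains_spath (l : List Hex) (hl : IsPathB l) (hne : l ≠ []) :
    ∃ l' : List Hex, IsSPath l' ∧ l'.head? = l.head? ∧ l'.getLast? = l.getLast? ∧
      ∀ x ∈ l', x ∈ l := by
  exact path_contains_spath_aux l.length l le_rfl hl hne
end

section
/- Any simple cycle in the triangular sublattice B containing more than three sites contains an s-loop (i.e., a subcycle whose consecutive-pair common A-neighbors are all distinct). -/
open MeasureTheory

section SLoopAux

lemma hex_ext_iff {a b : Hex} : a = b ↔ a.1 = b.1 ∧ a.2.1 = b.2.1 ∧ a.2.2 = b.2.2 := by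
  constructor
  · rintro rfl; exact ⟨rfl, rfl, rfl⟩
  · rintro ⟨h1, h2, h3⟩; exact Prod.ext h1 (Prod.ext h2 h3)

lemma hexB_eq_iff {a b : Hex} (ha : a.2.2 = true) (hb : b.2.2 = true) :
    a = b ↔ a.1 = b.1 ∧ a.2.1 = b.2.1 := by
  rw [hex_ext_iff, ha, hb]; simp

lemma adjB_iff {y z : Hex} (hy : y.2.2 = true) :
    HexGraph.Adj y z ↔ z.2.2 = false ∧
      ((z.1 = y.1 ∧ z.2.1 = y.2.1) ∨ (z.1 = y.1 + 1 ∧ z.2.1 = y.2.1) ∨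
        (z.1 = y.1 ∧ z.2.1 = y.2.1 + 1)) := by
  rw [HexGraph, SimpleGraph.fromRel_adj]
  constructor
  · rintro ⟨hne, h | h⟩
    · rw [h.1] at hy; exact absurd hy (by simp)
    · obtain ⟨hz, -, hc⟩ := h
      refine ⟨hz, ?_⟩
      simp only [Prod.mk.injEq] at hc
      omega
  · rintro ⟨hz, hc⟩
    refine ⟨?_, Or.inr ⟨hz, hy, ?_⟩⟩
    · intro he; rw [he, hz] at hy; exact Bool.noConfusion hy
    · simp only [Prod.mk.injEq]; omega

lemma link_unique {a b z z' : Hex} (ha : a.2.2 = true) (hb : b.2.2 = true) (hab : a ≠ b)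
    (h1 : HexGraph.Adj a z) (h2 : HexGraph.Adj b z)
    (h1' : HexGraph.Adj a z') (h2' : HexGraph.Adj b z') : z = z' := by
  rw [adjB_iff ha] at h1 h1'
  rw [adjB_iff hb] at h2 h2'
  rw [ne_eq, hexB_eq_iff ha hb] at hab
  obtain ⟨e1, c1⟩ := h1; obtain ⟨e2, c2⟩ := h2
  obtain ⟨e1', c1'⟩ := h1'; obtain ⟨e2', c2'⟩ := h2'
  rw [hex_ext_iff]
  exact ⟨by omega, by omega, by rw [e1, e1']⟩

lemma pigeon {a b c d z : Hex} (ha : a.2.2 = true) (hb : b.2.2 = true) (hc : c.2.2 = true)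
    (hd : d.2.2 = true)
    (hA : HexGraph.Adj a z) (hB : HexGraph.Adj b z) (hC : HexGraph.Adj c z)
    (hD : HexGraph.Adj d z)
    (hab : a ≠ b) (hac : a ≠ c) (hbc : b ≠ c) : d = a ∨ d = b ∨ d = c := by
  rw [adjB_iff ha] at hA; rw [adjB_iff hb] at hB; rw [adjB_iff hc] at hC
  rw [adjB_iff hd] at hD
  rw [ne_eq, hexB_eq_iff ha hb] at hab; rw [ne_eq, hexB_eq_iff ha hc] at hac
  rw [ne_eq, hexB_eq_iff hb hc] at hbc
  rw [hexB_eq_iff hd ha, hexB_eq_iff hd hb, hexB_eq_iff hd hc]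
  obtain ⟨-, cA⟩ := hA; obtain ⟨-, cB⟩ := hB; obtain ⟨-, cC⟩ := hC; obtain ⟨-, cD⟩ := hD
  omega

lemma share {a b c d z : Hex} (ha : a.2.2 = true) (hb : b.2.2 = true) (hc : c.2.2 = true)
    (hd : d.2.2 = true)
    (hA : HexGraph.Adj a z) (hB : HexGraph.Adj b z) (hC : HexGraph.Adj c z)
    (hD : HexGraph.Adj d z)
    (hab : a ≠ b) (hcd : c ≠ d) : a = c ∨ a = d ∨ b = c ∨ b = d := by
  rw [adjB_iff ha] at hA; rw [adjB_iff hb] at hB; rw [adjB_iff hc] at hC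
  rw [adjB_iff hd] at hD
  rw [ne_eq, hexB_eq_iff ha hb] at hab; rw [ne_eq, hexB_eq_iff hc hd] at hcd
  rw [hexB_eq_iff ha hc, hexB_eq_iff ha hd, hexB_eq_iff hb hc, hexB_eq_iff hb hd]
  obtain ⟨-, cA⟩ := hA; obtain ⟨-, cB⟩ := hB; obtain ⟨-, cC⟩ := hC; obtain ⟨-, cD⟩ := hD
  omega

lemma periodic_mod {α : Sort*} (n : ℕ) (hn : 0 < n) (y : ℕ → α)
    (hper : ∀ i, y (i + n) = y i) : ∀ m, y m = y (m % n) := by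
  intro m
  induction m using Nat.strong_induction_on with
  | _ m IH =>
    by_cases h : m < n
    · rw [Nat.mod_eq_of_lt h]
    · push_neg at h
      have h1 : m - n + n = m := by omega
      have h2 := hper (m - n)
      rw [h1] at h2
      rw [h2, IH (m - n) (by omega), Nat.mod_eq_sub_mod h]

lemma inj_of_distinct {α : Sort*} {n : ℕ} {g : ℕ → α}
    (h : ∀ i j, i < j → j < n → g i ≠ g j) :
    Function.Injective (fun i : Fin n => g (i : ℕ)) := by
  intro i j he
  rcases lt_trichotomy i j with hh | hh | hh
  · exact absurd he (h i j hh j.isLt)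
  · exact hh
  · exact absurd he.symm (h j i hh i.isLt)

lemma build_sloop (n : ℕ) (y zeta : ℕ → Hex) (hn : 3 ≤ n) (hy0 : y n = y 0)
    (hB : ∀ i, isB (y i))
    (hdist : ∀ i j, i < j → j < n → y i ≠ y j)
    (hadj : ∀ i, Badj (y i) (y (i + 1)))
    (hlink : ∀ i, IsLink (y i, y (i + 1)) (zeta i))
    (hzdist : ∀ i j, i < j → j < n → zeta i ≠ zeta j) :
    IsSLoop (List.ofFn fun i : Fin n => y (i : ℕ)) := by
  classical
  set l := List.ofFn (fun i : Fin n => y (i : ℕ)) with hl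
  have hlen : l.length = n := by simp [hl]
  have hLlen : (l ++ l.take 1).length = n + 1 := by
    rw [List.length_append, List.length_take, hlen]; omega
  have hgetL : ∀ (k : ℕ) (h : k < n + 1),
      (l ++ l.take 1)[k]'(by rw [hLlen]; omega) = y k := by
    intro k h
    rcases Nat.lt_or_ge k n with hk | hk
    · rw [List.getElem_append_left (by rw [hlen]; exact hk)]
      simp [hl]
    · have hk' : k = n := by omega
      subst hk'
      rw [List.getElem_append_right (by rw [hlen])]
      rw [List.getElem_take]
      · simp [hl, hlen]
        exact hy0.symm
  have hloop : IsLoopB l := by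
    refine ⟨?_, ?_, ?_, ?_⟩
    · intro x hx
      rw [hl, List.mem_ofFn] at hx
      obtain ⟨i, rfl⟩ := hx
      exact hB i
    · rw [hl, List.nodup_ofFn]
      exact inj_of_distinct hdist
    · rw [hlen]; exact hn
    · simp only [List.Chain', List.isChain_iff_getElem]
      intro i hi
      rw [hLlen] at hi
      rw [hgetL i (by omega), hgetL (i + 1) (by omega)]
      exact hadj i
  refine ⟨hloop, List.ofFn (fun i : Fin n => zeta (i : ℕ)), ?_, ?_⟩
  · rw [List.forall₂_iff_get]
    constructor
    · rw [List.length_zip, List.length_tail, hLlen]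
      simp
    · intro i h1 h2
      have hi : i < n := by simpa using h2
      simp only [List.get_eq_getElem, List.getElem_zip]
      simp only [List.get_eq_getElem, List.getElem_tail, List.getElem_ofFn]
      rw [hgetL i (by omega), hgetL (i + 1) (by omega)]
      exact hlink i
  · rw [List.nodup_ofFn]
    exact inj_of_distinct hzdist


lemma main_ind : ∀ n : ℕ, ∀ y : ℕ → Hex, 3 ≤ n →
    (∀ i, y (i + n) = y i) →
    (∀ i j, i < j → j < n → y i ≠ y j) →
    (∀ i, Badj (y i) (y (i + 1))) →
    (n = 3 → ∀ z, ¬(HexGraph.Adj (y 0) z ∧ HexGraph.Adj (y 1) z ∧ HexGraph.Adj (y 2) z)) →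
    ∃ l' : List Hex, IsSLoop l' ∧ ∀ x ∈ l', ∃ i, x = y i := by
  intro n
  induction n using Nat.strong_induction_on with
  | _ n IH =>
    intro y hn hper hdist hadj h3
    have npos : 0 < n := by omega
    have ymod := periodic_mod n npos y hper
    have yinj : ∀ i j, y i = y j → i % n = j % n := by
      intro i j h
      by_contra hne
      rw [ymod i, ymod j] at h
      rcases Nat.lt_or_ge (i % n) (j % n) with hlt | hge
      · exact hdist _ _ hlt (Nat.mod_lt _ npos) h
      · exact hdist _ _ (lt_of_le_of_ne hge fun e => hne e.symm) (Nat.mod_lt _ npos) h.symm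
    have modNe : ∀ t s, 0 < s → s < n → y (t + s) ≠ y t := by
      intro t s hs1 hs2 h
      have h1 := yinj _ _ h
      have h2 : s ≡ 0 [MOD n] := by
        refine Nat.ModEq.add_left_cancel' t ?_
        show (t + s) % n = (t + 0) % n
        simpa using h1
      have hdvd : n ∣ s := (Nat.modEq_zero_iff_dvd).1 h2
      exact absurd (Nat.le_of_dvd hs1 hdvd) (by omega)
    have hBy : ∀ i, isB (y i) := fun i => (hadj i).1
    have hBy' : ∀ i, (y i).2.2 = true := fun i => hBy i
    have hylt : ∀ i, y i ≠ y (i + 1) := fun i => (hadj i).2.2.1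
    by_cases hcol : ∃ i j z, i < j ∧ j < n ∧ IsLink (y i, y (i + 1)) z ∧
        IsLink (y j, y (j + 1)) z
    · -- there is a collision: find a star and shortcut
      obtain ⟨i, j, z, hij, hjn, hli, hlj⟩ := hcol
      obtain ⟨hzA, hai, hbi⟩ := hli
      obtain ⟨-, haj, hbj⟩ := hlj
      have A1 : HexGraph.Adj (y i) z := hai
      have A2 : HexGraph.Adj (y (i + 1)) z := hbi.symm
      have A3 : HexGraph.Adj (y j) z := haj
      have A4 : HexGraph.Adj (y (j + 1)) z := hbj.symm
      have hsh := share (hBy' i) (hBy' (i + 1)) (hBy' j) (hBy' (j + 1)) A1 A2 A3 A4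
        (hylt i) (hylt j)
      have hstar : ∃ t, t < n ∧ HexGraph.Adj (y t) z ∧ HexGraph.Adj (y (t + 1)) z ∧
          HexGraph.Adj (y (t + 2)) z := by
        rcases hsh with h | h | h | h
        · exact absurd (yinj _ _ h)
            (by rw [Nat.mod_eq_of_lt (by omega), Nat.mod_eq_of_lt hjn]; omega)
        · -- y i = y (j+1) : wraparound, i = 0, j = n-1
          have hm := yinj _ _ h
          rw [Nat.mod_eq_of_lt (by omega)] at hm
          have hi0 : i = 0 ∧ j + 1 = n := by
            by_cases hj1 : j + 1 < n
            · rw [Nat.mod_eq_of_lt hj1] at hm; omega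
            · have he : j + 1 = n := by omega
              rw [he, Nat.mod_self] at hm; omega
          obtain ⟨hi0, hj1⟩ := hi0
          subst hi0
          refine ⟨j, hjn, A3, A4, ?_⟩
          have he2 : y (j + 2) = y 1 := by
            rw [show j + 2 = 1 + n by omega]; exact hper 1
          rw [he2]; exact A2
        · -- y (i+1) = y j : j = i + 1
          have hm := yinj _ _ h
          rw [Nat.mod_eq_of_lt (by omega), Nat.mod_eq_of_lt hjn] at hm
          have he : j = i + 1 := by omega
          subst he
          exact ⟨i, by omega, A1, A2, A4⟩
        · -- y (i+1) = y (j+1) : impossible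
          exfalso
          have hm := yinj _ _ h
          rw [Nat.mod_eq_of_lt (show i + 1 < n by omega)] at hm
          by_cases hj1 : j + 1 < n
          · rw [Nat.mod_eq_of_lt hj1] at hm; omega
          · have he : j + 1 = n := by omega
            rw [he, Nat.mod_self] at hm; omega
      obtain ⟨t, htn, S0, S1, S2⟩ := hstar
      by_cases hn3 : n = 3
      · exfalso
        subst hn3
        have key : ∀ r, r < 3 → HexGraph.Adj (y r) z := by
          intro r hr
          obtain ⟨k, hk3, hkr⟩ : ∃ k, k < 3 ∧ (t + k) % 3 = r :=
            ⟨(r + 3 - t % 3) % 3, by omega, by omega⟩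
          have he : y (t + k) = y r := by rw [ymod (t + k), hkr]
          rw [← he]
          interval_cases k
          · simpa using S0
          · exact S1
          · exact S2
        exact h3 rfl z ⟨key 0 (by omega), key 1 (by omega), key 2 (by omega)⟩
      · -- n ≥ 4 : shortcut around the star
        have hn4 : 4 ≤ n := by omega
        set m := n - 1 with hmdef
        have hm3 : 3 ≤ m := by omega
        have hmn : m < n := by omega
        set y' : ℕ → Hex := fun i => if i % m = 0 then y t else y (t + 1 + i % m) with hy'
        have hy'0 : ∀ i, i % m = 0 → y' i = y t := by intro i h; simp [hy', h]
        have hy'r : ∀ i, i % m ≠ 0 → y' i = y (t + 1 + i % m) := by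
          intro i h; simp [hy', h]
        have hper' : ∀ i, y' (i + m) = y' i := by
          intro i; simp [hy', Nat.add_mod_right]
        have hstep : ∀ i, (i + 1) % m = if i % m + 1 = m then 0 else i % m + 1 := by
          intro i
          rw [Nat.add_mod, Nat.mod_eq_of_lt (show 1 < m by omega)]
          have h1 : i % m < m := Nat.mod_lt _ (by omega)
          split
          · next h => rw [h, Nat.mod_self]
          · next h => exact Nat.mod_eq_of_lt (by omega)
        have hdist' : ∀ i j, i < j → j < m → y' i ≠ y' j := by
          intro i j hij hjm
          have hi : i % m = i := Nat.mod_eq_of_lt (by omega)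
          have hj : j % m = j := Nat.mod_eq_of_lt hjm
          by_cases hi0 : i = 0
          · subst hi0
            rw [hy'0 0 (by simp), hy'r j (by omega), hj]
            intro h
            refine modNe t (1 + j) (by omega) (by omega) ?_
            rw [show t + (1 + j) = t + 1 + j by omega]
            exact h.symm
          · rw [hy'r i (by omega), hy'r j (by omega), hi, hj]
            intro h
            refine modNe (t + 1 + i) (j - i) (by omega) (by omega) ?_
            rw [show t + 1 + i + (j - i) = t + 1 + j by omega]
            exact h.symm
        have hadj' : ∀ i, Badj (y' i) (y' (i + 1)) := by
          intro i
          have hs := hstep i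
          have hrm : i % m < m := Nat.mod_lt _ (by omega)
          by_cases h0 : i % m = 0
          · -- pair (y t, y (t+2))
            rw [h0] at hs
            have hs1 : (i + 1) % m = 1 := by rw [hs]; split <;> omega
            rw [hy'0 i h0, hy'r (i + 1) (by omega), hs1]
            refine ⟨hBy t, hBy (t + 2), ?_, z, hzA, S0, S2.symm⟩
            exact (modNe t 2 (by omega) (by omega)).symm
          · by_cases h1 : i % m + 1 = m
            · -- pair (y (t+m), y t)
              have hs0 : (i + 1) % m = 0 := by rw [hs]; simp [h1]
              rw [hy'r i h0, hy'0 (i + 1) hs0]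
              have he : t + 1 + i % m = t + m := by omega
              rw [he]
              have hb := hadj (t + m)
              have he2 : y (t + m + 1) = y t := by
                rw [show t + m + 1 = t + n by omega]; exact hper t
              rwa [he2] at hb
            · -- generic pair
              have hs2 : (i + 1) % m = i % m + 1 := by rw [hs]; simp [h1]
              rw [hy'r i h0, hy'r (i + 1) (by omega), hs2]
              have he : t + 1 + (i % m + 1) = (t + 1 + i % m) + 1 := by omega
              rw [he]
              exact hadj (t + 1 + i % m)
        have h3' : m = 3 → ∀ z', ¬(HexGraph.Adj (y' 0) z' ∧ HexGraph.Adj (y' 1) z' ∧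
            HexGraph.Adj (y' 2) z') := by
          intro hm4 z' ⟨B0, B1, B2⟩
          have hn5 : n = 4 := by omega
          rw [hy'0 0 (by simp)] at B0
          rw [hy'r 1 (by rw [Nat.mod_eq_of_lt (by omega)]; omega),
            Nat.mod_eq_of_lt (by omega)] at B1
          rw [hy'r 2 (by rw [Nat.mod_eq_of_lt (by omega)]; omega),
            Nat.mod_eq_of_lt (by omega)] at B2
          -- B0 : Adj (y t) z', B1 : Adj (y (t+1+1)) z', B2 : Adj (y (t+1+2)) z'
          have hac : y t ≠ y (t + 2) := (modNe t 2 (by omega) (by omega)).symm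
          have hzz : z' = z := by
            refine link_unique (hBy' t) (hBy' (t + 2)) hac B0 ?_ S0 S2
            rw [show t + 2 = t + 1 + 1 by omega]
            exact B1
          rw [hzz] at B2
          have hd := pigeon (hBy' t) (hBy' (t + 1)) (hBy' (t + 2)) (hBy' (t + 1 + 2))
            S0 S1 S2 B2
            ((modNe t 1 (by omega) (by omega)).symm) hac
            (by rw [show t + 2 = t + 1 + 1 by omega]
                exact (modNe (t + 1) 1 (by omega) (by omega)).symm)
          rcases hd with h | h | h
          · exact modNe t 3 (by omega) (by omega) (by rw [show t + 3 = t + 1 + 2 by omega]; exact h)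
          · exact modNe (t + 1) 2 (by omega) (by omega)
              (by rw [show t + 1 + 2 = t + 1 + 2 by omega]; exact h)
          · exact modNe (t + 2) 1 (by omega) (by omega)
              (by rw [show t + 2 + 1 = t + 1 + 2 by omega]; exact h)
        obtain ⟨l', hsl, hmem⟩ := IH m hmn y' hm3 hper' hdist' hadj' h3'
        refine ⟨l', hsl, ?_⟩
        intro x hx
        obtain ⟨i, hxe⟩ := hmem x hx
        by_cases h0 : i % m = 0
        · exact ⟨t, by rw [hxe, hy'0 i h0]⟩
        · exact ⟨t + 1 + i % m, by rw [hxe, hy'r i h0]⟩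
    · -- no collision: the loop itself is an s-loop
      push_neg at hcol
      have hlinkEx : ∀ i, ∃ z, IsLink (y i, y (i + 1)) z := by
        intro i
        obtain ⟨-, -, -, z, hz⟩ := hadj i
        exact ⟨z, hz⟩
      choose zeta hzeta using hlinkEx
      have hzdist : ∀ i j, i < j → j < n → zeta i ≠ zeta j := by
        intro i j hij hjn he
        exact hcol i j (zeta j) hij hjn (he ▸ hzeta i) (hzeta j)
      have hy0 : y n = y 0 := by simpa using hper 0
      refine ⟨_, build_sloop n y zeta hn hy0 hBy hdist hadj hzeta hzdist, ?_⟩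
      intro x hx
      rw [List.mem_ofFn] at hx
      obtain ⟨i, rfl⟩ := hx
      exact ⟨i, rfl⟩

end SLoopAux

/-- any simple cycle in `B` with more than three sites contains an s-loop. -/
theorem long_loop_contains_sloop (l : List Hex) (hl : IsLoopB l) (hlen : 3 < l.length) :
    ∃ l' : List Hex, IsSLoop l' ∧ ∀ x ∈ l', x ∈ l := by
  obtain ⟨hBl, hnd, hlen3, hch⟩ := hl
  set n := l.length with hn
  have npos : 0 < n := by omega
  set y : ℕ → Hex := fun i => l.get ⟨i % n, Nat.mod_lt _ npos⟩ with hy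
  have ycongr : ∀ a b : ℕ, a % n = b % n → y a = y b := by
    intro a b h
    simp only [hy]
    congr 1
    exact Fin.mk_eq_mk.mpr h
  have hLlen : (l ++ l.take 1).length = n + 1 := by
    rw [List.length_append, List.length_take, ← hn]; omega
  have hgetL : ∀ (k : ℕ) (h : k < n + 1),
      (l ++ l.take 1)[k]'(by rw [hLlen]; omega) = y k := by
    have gcongr : ∀ (L : List Hex) (a b : ℕ) (hab : a = b) (ha : a < L.length)
        (hb : b < L.length), L[a]'ha = L[b]'hb := by
      intro L a b hab ha hb; subst hab; rfl
    intro k h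
    rcases Nat.lt_or_ge k n with hk | hk
    · rw [List.getElem_append_left (by rw [← hn]; exact hk)]
      simp only [hy, List.get_eq_getElem]
      exact gcongr l _ _ (Nat.mod_eq_of_lt hk).symm _ _
    · have hk' : k = n := by omega
      subst hk'
      rw [List.getElem_append_right (by rw [← hn])]
      rw [List.getElem_take]
      simp only [hy, List.get_eq_getElem]
      exact gcongr l _ _ (by rw [Nat.mod_self]; omega) _ _
  simp only [List.Chain', List.isChain_iff_getElem] at hch
  have hBadj : ∀ i, Badj (y i) (y (i + 1)) := by
    intro i
    have hr : i % n < n := Nat.mod_lt _ npos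
    have h1 := hch (i % n) (by rw [hLlen]; omega)
    rw [hgetL (i % n) (by omega), hgetL (i % n + 1) (by omega)] at h1
    have e1 : y (i % n) = y i := ycongr _ _ (Nat.mod_mod_of_dvd _ dvd_rfl)
    have e2 : y (i % n + 1) = y (i + 1) := by
      refine ycongr _ _ ?_
      conv_rhs => rw [Nat.add_mod, Nat.mod_eq_of_lt (show 1 < n by omega)]
    rw [e1, e2] at h1
    exact h1
  have hper : ∀ i, y (i + n) = y i := fun i => ycongr _ _ (Nat.add_mod_right i n)
  have hdist : ∀ i j, i < j → j < n → y i ≠ y j := by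
    intro i j hij hjn he
    have h1 : (⟨i % n, Nat.mod_lt _ npos⟩ : Fin n) = ⟨j % n, Nat.mod_lt _ npos⟩ := by
      have := (hnd.get_inj_iff (i := ⟨i % n, by rw [← hn]; exact Nat.mod_lt _ npos⟩)
        (j := ⟨j % n, by rw [← hn]; exact Nat.mod_lt _ npos⟩)).mp he
      exact Fin.mk_eq_mk.mpr (by simpa using Fin.mk_eq_mk.mp this)
    have := Fin.mk_eq_mk.mp h1
    rw [Nat.mod_eq_of_lt (by omega), Nat.mod_eq_of_lt hjn] at this
    omega
  obtain ⟨l', hsl, hmem⟩ := main_ind n y (by omega) hper hdist hBadj (by omega)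
  refine ⟨l', hsl, ?_⟩
  intro x hx
  obtain ⟨i, rfl⟩ := hmem x hx
  exact List.get_mem l _
end

section
/- An s-loop of constant spin sign in the triangular sublattice B at time 0 is stable: after the first update of sublattice A, its sites together with the intermediate A-sites form a constant-sign simple cycle in the hexagonal lattice, and hence the sign of every site of the s-loop is preserved for all later times of the alternating majority dynamics. -/
open MeasureTheory

lemma maj_two {σ : Hex → Bool} {s : Bool} {x u v : Hex} (huv : u ≠ v)
    (hu : u = (nbrsT x).1 ∨ u = (nbrsT x).2.1 ∨ u = (nbrsT x).2.2)
    (hv : v = (nbrsT x).1 ∨ v = (nbrsT x).2.1 ∨ v = (nbrsT x).2.2)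
    (hsu : σ u = s) (hsv : σ v = s) : majAt σ x = s := by
  rcases hu with hu|hu|hu <;> rcases hv with hv|hv|hv <;> subst hu hv <;>
    simp only [majAt] at * <;> first
      | exact absurd rfl huv
      | (cases s <;> simp_all)

lemma adj_B_nbr {y z : Hex} (hy : isB y) (h : HexGraph.Adj y z) :
    z = (nbrsT y).1 ∨ z = (nbrsT y).2.1 ∨ z = (nbrsT y).2.2 := by
  obtain ⟨i, j, b⟩ := y
  obtain ⟨p, q, c⟩ := z
  simp only [isB] at hy; subst hy
  rw [HexGraph, SimpleGraph.fromRel_adj] at h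
  obtain ⟨-, h | h⟩ := h
  · exact absurd h.1 (by simp)
  · obtain ⟨hc, -, h⟩ := h
    simp only at hc; subst hc
    simp only [Prod.mk.injEq] at h
    rcases h with h|h|h <;> simp [nbrsT, Prod.ext_iff] <;> omega

lemma adj_A_nbr {z y : Hex} (hz : isA z) (h : HexGraph.Adj z y) :
    y = (nbrsT z).1 ∨ y = (nbrsT z).2.1 ∨ y = (nbrsT z).2.2 := by
  obtain ⟨i, j, b⟩ := z
  obtain ⟨p, q, c⟩ := y
  simp only [isA] at hz; subst hz
  rw [HexGraph, SimpleGraph.fromRel_adj] at h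
  obtain ⟨-, h | h⟩ := h
  · obtain ⟨-, hc, h⟩ := h
    simp only at hc; subst hc
    simp only [Prod.mk.injEq] at h
    rcases h with h|h|h <;> simp [nbrsT, Prod.ext_iff] <;> omega
  · exact absurd h.2.1 (by simp)

/-- an s-loop of constant sign at time 0 is stable: after the first update
the intermediate `A`-sites carry the same sign (forming a constant-sign cycle in `H`),
and every site of the s-loop keeps its sign forever. -/
theorem sloop_stable (σ0 : Hex → Bool) (s : Bool) (l zs : List Hex) (hl : IsLoopB l)
    (hzs : List.Forall₂ IsLink ((l ++ l.take 1).zip (l ++ l.take 1).tail) zs)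
    (hnd : zs.Nodup) (hconst : ∀ y ∈ l, σ0 y = s) :
    (∀ z ∈ zs, evolve σ0 1 z = s) ∧ ∀ n : ℕ, ∀ y ∈ l, evolve σ0 n y = s := by
  obtain ⟨hB, hndl, hk, hch⟩ := hl
  set k := l.length with hkdef
  set L := l ++ l.take 1 with hLdef
  have hLlen : L.length = k + 1 := by
    simp [hLdef, List.length_take]; omega
  have htl : L.tail.length = k := by simp [hLlen]
  have hziplen : (L.zip L.tail).length = k := by
    simp [List.length_zip, hLlen, htl]
  rw [List.forall₂_iff_get] at hzs
  obtain ⟨hlen, hget⟩ := hzs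
  have hzslen : zs.length = k := by omega
  have hLl : ∀ j (hj : j < k), L[j]'(by omega) = l[j]'(by omega) := by
    intro j hj; exact List.getElem_append_left (by omega)
  have hLk : L[k]'(by omega) = l[0]'(by omega) := by
    rw [List.getElem_append_right (by omega)]
    simp [List.getElem_take, hkdef]
  have hlink : ∀ j (hj : j < k),
      IsLink (L[j]'(by omega), L[j+1]'(by omega)) (zs[j]'(by omega)) := by
    intro j hj
    have := hget j (by omega) (by omega)
    simpa [List.getElem_zip, List.getElem_tail] using this
  -- each z in zs links two distinct members of l
  have hzspec : ∀ z ∈ zs, isA z ∧ ∃ y ∈ l, ∃ y' ∈ l, y ≠ y' ∧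
      HexGraph.Adj y z ∧ HexGraph.Adj z y' := by
    intro z hz
    obtain ⟨j, hj, rfl⟩ := List.mem_iff_getElem.1 hz
    have hj' : j < k := by omega
    obtain ⟨hA, h1, h2⟩ := hlink j hj'
    have hne : L[j]'(by omega) ≠ L[j+1]'(by omega) := by
      have := List.isChain_iff_getElem.1 hch j (by simp only [hLlen]; omega)
      simpa using this.2.2.1
    have hm1 : L[j]'(by omega) ∈ l := by
      rw [hLl j hj']; exact List.getElem_mem _
    have hm2 : L[j+1]'(by omega) ∈ l := by
      rcases Nat.lt_or_ge (j+1) k with h | h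
      · rw [hLl (j+1) h]; exact List.getElem_mem _
      · have : j + 1 = k := by omega
        simp only [this, hLk]; exact List.getElem_mem _
    exact ⟨hA, _, hm1, _, hm2, hne, h1, h2⟩
  -- each y in l is adjacent to two distinct members of zs
  have hyspec : ∀ y ∈ l, ∃ z ∈ zs, ∃ z' ∈ zs, z ≠ z' ∧
      HexGraph.Adj y z ∧ HexGraph.Adj y z' := by
    intro y hy
    obtain ⟨i, hi, rfl⟩ := List.mem_iff_getElem.1 hy
    have hLi : L[i]'(by omega) = l[i]'(by omega) := hLl i hi
    rcases Nat.eq_zero_or_pos i with rfl | hipos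
    · obtain ⟨hA1, h11, h12⟩ := hlink 0 (by omega)
      obtain ⟨hA2, h21, h22⟩ := hlink (k-1) (by omega)
      refine ⟨zs[0]'(by omega), List.getElem_mem _, zs[k-1]'(by omega), List.getElem_mem _,
        ?_, ?_, ?_⟩
      · intro h
        have := (List.Nodup.getElem_inj_iff hnd).1 h
        omega
      · rw [hLl 0 (by omega)] at h11; exact h11
      · have hkk : k - 1 + 1 = k := by omega
        simp only [hkk, hLk] at h22
        exact h22.symm
    · obtain ⟨hA1, h11, h12⟩ := hlink i (by omega)
      obtain ⟨hA2, h21, h22⟩ := hlink (i-1) (by omega)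
      refine ⟨zs[i]'(by omega), List.getElem_mem _, zs[i-1]'(by omega), List.getElem_mem _,
        ?_, ?_, ?_⟩
      · intro h
        have := (List.Nodup.getElem_inj_iff hnd).1 h
        omega
      · rw [hLi] at h11; exact h11
      · have hii : i - 1 + 1 = i := by omega
        simp only [hii, hLi] at h22
        exact h22.symm
  -- main induction
  have main : ∀ n, (∀ y ∈ l, evolve σ0 n y = s) ∧
      (1 ≤ n → ∀ z ∈ zs, evolve σ0 n z = s) := by
    intro n
    induction n with
    | zero => exact ⟨hconst, by omega⟩
    | succ n ih =>
      by_cases hpar : (n + 1) % 2 = 1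
      · have he : evolve σ0 (n + 1) = updA (evolve σ0 n) := by
          rw [evolve, if_pos hpar]
        constructor
        · intro y hy
          have hyB : y.2.2 = true := hB y hy
          rw [he]
          show (if y.2.2 = false then _ else _) = s
          rw [if_neg (by simp [hyB])]
          exact ih.1 y hy
        · intro _ z hz
          obtain ⟨hA, y, hy, y', hy', hne, h1, h2⟩ := hzspec z hz
          rw [he]
          have hA' : z.2.2 = false := hA
          show (if z.2.2 = false then majAt (evolve σ0 n) z else _) = s
          rw [if_pos hA']
          exact maj_two hne (adj_A_nbr hA h1.symm) (adj_A_nbr hA h2)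
            (ih.1 y hy) (ih.1 y' hy')
      · have hpar0 : (n + 1) % 2 = 0 := by omega
        have hn1 : 1 ≤ n := by omega
        have he : evolve σ0 (n + 1) = updB (evolve σ0 n) := by
          rw [evolve, if_neg hpar]
        constructor
        · intro y hy
          have hyB : y.2.2 = true := hB y hy
          obtain ⟨z, hz, z', hz', hne, h1, h2⟩ := hyspec y hy
          rw [he]
          show (if y.2.2 = true then majAt (evolve σ0 n) y else _) = s
          rw [if_pos hyB]
          exact maj_two hne (adj_B_nbr hyB h1) (adj_B_nbr hyB h2)
            (ih.2 hn1 z hz) (ih.2 hn1 z' hz')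
        · intro _ z hz
          have hA : z.2.2 = false := (hzspec z hz).1
          rw [he]
          show (if z.2.2 = true then _ else _) = s
          rw [if_neg (by simp [hA])]
          exact ih.2 hn1 z hz
  exact ⟨(main 1).2 le_rfl, fun n => (main n).1⟩
end

section
/- If (y_0,...,y_m) is an s-path in B of constant sign in the initial configuration sigma^0, and both partial clusters C_{(y_1,y_0)} and C_{(y_{m-1},y_m)} contain s-loops, then the s-path is stable: every y_i retains its initial sign in sigma^n for all n from 0 to infinity under the alternating majority dynamics. -/
open MeasureTheory

-- basic adjacency lemmas
lemma adj_BA {y z : Hex} (hy : isB y) (hz : isA z) :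
    HexGraph.Adj y z ↔ ((z.1 = y.1 ∧ z.2.1 = y.2.1) ∨ (z.1 = y.1 + 1 ∧ z.2.1 = y.2.1) ∨
      (z.1 = y.1 ∧ z.2.1 = y.2.1 + 1)) := by
  obtain ⟨a, b, c⟩ := y; obtain ⟨d, e, f⟩ := z
  simp only [isB] at hy; simp only [isA] at hz; subst hy; subst hz
  simp only [HexGraph, SimpleGraph.fromRel_adj, hexRel, Prod.mk.injEq]
  constructor
  · rintro ⟨-, h | h⟩ <;> simp_all <;> omega
  · rintro h
    refine ⟨by simp, Or.inr ?_⟩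
    show True ∧ True ∧ _
    refine ⟨trivial, trivial, ?_⟩
    omega

lemma mem_nbrsT {x a : Hex} (h : HexGraph.Adj x a) :
    a = (nbrsT x).1 ∨ a = (nbrsT x).2.1 ∨ a = (nbrsT x).2.2 := by
  obtain ⟨i, j, c⟩ := x; obtain ⟨d, e, f⟩ := a
  simp only [HexGraph, SimpleGraph.fromRel_adj, hexRel, Prod.mk.injEq] at h
  obtain ⟨-, h | h⟩ := h
  · obtain ⟨hc, hf, h⟩ := h; subst hc; subst hf
    simp only [nbrsT, Prod.mk.injEq]
    rcases h with ⟨h1,h2⟩|⟨h1,h2⟩|⟨h1,h2⟩ <;> simp_all <;> omega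
  · obtain ⟨hf, hc, h⟩ := h; subst hc; subst hf
    simp only [nbrsT, Prod.mk.injEq]
    rcases h with ⟨h1,h2⟩|⟨h1,h2⟩|⟨h1,h2⟩ <;> simp_all <;> omega

lemma maj_of_two {σ : Hex → Bool} {s : Bool} {x a b : Hex} (hab : a ≠ b)
    (ha : HexGraph.Adj x a) (hb : HexGraph.Adj x b) (hsa : σ a = s) (hsb : σ b = s) :
    majAt σ x = s := by
  rcases mem_nbrsT ha with h1 | h1 | h1 <;> rcases mem_nbrsT hb with h2 | h2 | h2 <;>
    first
      | (exact absurd (h1.trans h2.symm) hab)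
      | (subst h1; subst h2; cases s <;> simp_all [majAt])
lemma hexAdj_symm {a b : Hex} (h : HexGraph.Adj a b) : HexGraph.Adj b a := h.symm

lemma isLink_unique {a b z z' : Hex} (hab : a ≠ b) (ha : isB a) (hb : isB b)
    (h1 : isA z ∧ HexGraph.Adj a z ∧ HexGraph.Adj z b)
    (h2 : isA z' ∧ HexGraph.Adj a z' ∧ HexGraph.Adj z' b) : z = z' := by
  obtain ⟨hz, hza, hzb⟩ := h1
  obtain ⟨hz', hza', hzb'⟩ := h2
  have hzb2 := (adj_BA hb hz).1 hzb.symm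
  have hzb2' := (adj_BA hb hz').1 hzb'.symm
  have hza2 := (adj_BA ha hz).1 hza
  have hza2' := (adj_BA ha hz').1 hza'
  have hne : ¬(a.1 = b.1 ∧ a.2.1 = b.2.1) := by
    rintro ⟨e1, e2⟩
    apply hab
    have e3 : a.2.2 = b.2.2 := by rw [ha, hb]
    exact Prod.ext e1 (Prod.ext e2 e3)
  have e3 : z.2.2 = z'.2.2 := by rw [hz, hz']
  refine Prod.ext ?_ (Prod.ext ?_ e3) <;> omega

def Cert (S : Set Hex) (y z : Hex) : Prop :=
  isA z ∧ HexGraph.Adj y z ∧ ∃ p ∈ S, p ≠ y ∧ HexGraph.Adj z p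

def StableSet (σ0 : Hex → Bool) (s : Bool) (S : Set Hex) : Prop :=
  (∀ y ∈ S, isB y ∧ σ0 y = s) ∧ ∀ y ∈ S, ∃ z1 z2, z1 ≠ z2 ∧ Cert S y z1 ∧ Cert S y z2

lemma evolve_succ (σ0 : Hex → Bool) (n : ℕ) :
    evolve σ0 (n+1) = if (n+1) % 2 = 1 then updA (evolve σ0 n) else updB (evolve σ0 n) := rfl

lemma stable_evolve {σ0 : Hex → Bool} {s : Bool} {S : Set Hex} (h : StableSet σ0 s S) :
    ∀ n, ∀ y ∈ S, evolve σ0 n y = s := by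
  obtain ⟨hBS, hcert⟩ := h
  have eA : ∀ k, evolve σ0 (2*k+1) = updA (evolve σ0 (2*k)) := by
    intro k; rw [evolve_succ, if_pos (by omega)]
  have hBfix : ∀ k, ∀ y ∈ S, evolve σ0 (2*k+1) y = evolve σ0 (2*k) y := by
    intro k y hy
    rw [eA k]; unfold updA
    have := (hBS y hy).1; simp only [isB] at this
    rw [if_neg (by simp [this])]
  have key : ∀ k, ∀ y ∈ S, evolve σ0 (2*k) y = s := by
    intro k
    induction k with
    | zero => intro y hy; exact (hBS y hy).2
    | succ k ih =>
      have hA : ∀ y ∈ S, ∀ z, Cert S y z → evolve σ0 (2*k+1) z = s := by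
        rintro y hy z ⟨hzA, hadj, p, hpS, hpne, hpadj⟩
        rw [eA k]; unfold updA
        simp only [isA] at hzA
        rw [if_pos hzA]
        exact maj_of_two (Ne.symm hpne) hadj.symm hpadj (ih y hy) (ih p hpS)
      intro y hy
      have e2 : evolve σ0 (2*(k+1)) = updB (evolve σ0 (2*k+1)) := by
        have h21 : 2*(k+1) = (2*k+1)+1 := by omega
        rw [h21, evolve_succ, if_neg (by omega)]
      rw [e2]; unfold updB
      have hyB := (hBS y hy).1; simp only [isB] at hyB
      rw [if_pos hyB]
      obtain ⟨z1, z2, hz12, hc1, hc2⟩ := hcert y hy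
      exact maj_of_two hz12 hc1.2.1 hc2.2.1 (hA y hy z1 hc1) (hA y hy z2 hc2)
  intro n y hy
  rcases Nat.even_or_odd n with ⟨k, hk⟩ | ⟨k, hk⟩
  · have : n = 2*k := by omega
    rw [this]; exact key k y hy
  · have : n = 2*k+1 := by omega
    rw [this, hBfix k y hy]; exact key k y hy
lemma Badj_symm {a b : Hex} (h : Badj a b) : Badj b a := by
  obtain ⟨ha, hb, hne, z, hz, h1, h2⟩ := h
  exact ⟨hb, ha, hne.symm, z, hz, h2.symm, h1.symm⟩

lemma chain'_getElem {α} {R : α → α → Prop} {l : List α} (h : l.Chain' R) (i : ℕ)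
    (hi : i + 1 < l.length) : R (l[i]'(by omega)) (l[i+1]'hi) := by
  have := List.isChain_iff_getElem.1 h i (by omega)
  simpa using this

def NoStar (p : List Hex) : Prop :=
  ∀ i (h : i + 2 < p.length),
    ¬ IsStar (p[i]'(by omega)) (p[i+1]'(by omega)) (p[i+2]'h)

lemma path_cert_interior {S : Set Hex} {p : List Hex} (hp : IsPathB p) (hns : NoStar p)
    (hpS : ∀ w ∈ p, w ∈ S) {j : ℕ} (h2 : j + 2 < p.length) :
    ∃ z1 z2, z1 ≠ z2 ∧ Cert S (p[j+1]'(by omega)) z1 ∧ Cert S (p[j+1]'(by omega)) z2 := by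
  obtain ⟨hB, hch, hnd⟩ := hp
  obtain ⟨_, _, hne1, z1, hz1, ha1, ha1'⟩ := chain'_getElem hch j (by omega)
  obtain ⟨_, _, hne2, z2, hz2, ha2, ha2'⟩ := chain'_getElem hch (j+1) h2
  refine ⟨z1, z2, ?_, ⟨hz1, ha1'.symm, p[j]'(by omega), hpS _ (List.getElem_mem _), hne1, ha1.symm⟩,
    ⟨hz2, ha2, p[j+2]'h2, hpS _ (List.getElem_mem _), (hne2).symm, ha2'⟩⟩
  rintro rfl
  refine hns j h2 ⟨⟨hB _ (List.getElem_mem _), hB _ (List.getElem_mem _), hne1, z1, hz1, ha1, ha1'⟩,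
    ⟨hB _ (List.getElem_mem _), hB _ (List.getElem_mem _), hne2, z1, hz2, ha2, ha2'⟩,
    ⟨hB _ (List.getElem_mem _), hB _ (List.getElem_mem _), ?_, z1, hz1, ha2'.symm, ha1.symm⟩,
    z1, hz1, ha1, ha1'.symm, ha2'.symm⟩
  intro hh
  rw [hnd.getElem_inj_iff] at hh
  omega

lemma spath_noStar {l : List Hex} (h : IsSPath l) : NoStar l := by
  obtain ⟨⟨hB, hch, hnd⟩, zs, hf, hzs⟩ := h
  have hlen := (List.forall₂_iff_get.1 hf).1
  have hget := (List.forall₂_iff_get.1 hf).2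
  have hzlen : zs.length = l.length - 1 := by
    rw [← hlen]; simp [List.length_zip]
  intro j hj hstar
  have hlink : ∀ i (hi : i + 1 < l.length), IsLink ((l[i]'(by omega)), (l[i+1]'hi)) (zs[i]'(by omega)) := by
    intro i hi
    have h1 : i < (l.zip l.tail).length := by simp [List.length_zip]; omega
    have := hget i h1 (by omega)
    simpa [List.get_eq_getElem, List.getElem_zip, List.getElem_tail] using this
  obtain ⟨hb1, hb2, hb3, c, hc, hc1, hc2, hc3⟩ := hstar
  have e1 : zs[j]'(by omega) = c := by
    refine isLink_unique hb1.2.2.1 (hB _ (List.getElem_mem _)) (hB _ (List.getElem_mem _))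
      ?_ ⟨hc, hc1, hc2.symm⟩
    have := hlink j (by omega)
    exact ⟨this.1, this.2.1, this.2.2⟩
  have e2 : zs[j+1]'(by omega) = c := by
    refine isLink_unique hb2.2.2.1 (hB _ (List.getElem_mem _)) (hB _ (List.getElem_mem _))
      ?_ ⟨hc, hc2, hc3.symm⟩
    have := hlink (j+1) (by omega)
    exact ⟨this.1, this.2.1, this.2.2⟩
  have : zs[j]'(by omega) = zs[j+1]'(by omega) := e1.trans e2.symm
  rw [hzs.getElem_inj_iff] at this
  omega

lemma endpoint_cert {S : Set Hex} {x x' : Hex} (hx : isB x) (hx' : isB x') (hxx' : x ≠ x')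
    (hB : Badj x' x) (hxS : x ∈ S) {q : List Hex} (hq : IsPathB q) (hhead : q.head? = some x')
    (hinv : ∀ h : 1 < q.length, (q[1]'h) ≠ x ∧ ¬ IsStar x' (q[1]'h) x)
    (hqS : ∀ w ∈ q, w ∈ S) (hlen : 2 ≤ q.length) :
    ∃ z1 z2, z1 ≠ z2 ∧ Cert S x' z1 ∧ Cert S x' z2 := by
  obtain ⟨hBq, hch, hnd⟩ := hq
  have h0 : q[0]'(by omega) = x' := by
    rw [List.head?_eq_getElem?] at hhead
    have : q[0]? = some (q[0]'(by omega)) := List.getElem?_eq_getElem _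
    rw [this] at hhead
    exact (Option.some_injective _ hhead)
  obtain ⟨hx'B, hxB, hne', z1, hz1, ha1, ha2⟩ := hB
  have hbadj : Badj (q[0]'(by omega)) (q[1]'(by omega)) := chain'_getElem hch 0 (by omega)
  rw [h0] at hbadj
  obtain ⟨-, hbB, hneb, z2, hz2, hA1, hA2⟩ := hbadj
  obtain ⟨hb1x, hb1star⟩ := hinv (by omega)
  refine ⟨z1, z2, ?_, ⟨hz1, ha1, x, hxS, hxx', ha2⟩,
    ⟨hz2, hA1, q[1]'(by omega), hqS _ (List.getElem_mem _), ?_, hA2⟩⟩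
  · rintro rfl
    refine hb1star ⟨⟨hx'B, hbB, hneb, z1, hz2, hA1, hA2⟩,
      ⟨hbB, hx, hb1x, z1, hz1, hA2.symm, ha2⟩,
      ⟨hx, hx', hxx', z1, hz1, ha2.symm, ha1.symm⟩,
      z1, hz1, ha1, hA2.symm, ha2.symm⟩
  · intro hh
    rw [hh, ← h0] at hneb
    exact hneb rfl
lemma loop_cert {S : Set Hex} {sl : List Hex} (h : IsSLoop sl) (hslS : ∀ w ∈ sl, w ∈ S)
    {w : Hex} (hw : w ∈ sl) : ∃ z1 z2, z1 ≠ z2 ∧ Cert S w z1 ∧ Cert S w z2 := by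
  obtain ⟨⟨hB, hnd, hlen3, hch⟩, zs, hf, hzs⟩ := h
  obtain ⟨m, hm⟩ : ∃ m, sl.length = m + 3 := ⟨sl.length - 3, by omega⟩
  have hL1 : (sl ++ sl.take 1).length = m + 4 := by
    simp [List.length_take]; omega
  have hlenf := (List.forall₂_iff_get.1 hf).1
  have hget := (List.forall₂_iff_get.1 hf).2
  have hzlen : zs.length = m + 3 := by
    rw [← hlenf]; simp [List.length_zip, List.length_take]; omega
  have hlink : ∀ i (hi : i + 1 < m + 4),
      IsLink (((sl ++ sl.take 1)[i]'(by omega)), ((sl ++ sl.take 1)[i+1]'(by rw [hL1]; omega)))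
        (zs[i]'(by omega)) := by
    intro i hi
    have h1 : i < ((sl ++ sl.take 1).zip (sl ++ sl.take 1).tail).length := by
      simp [List.length_zip, List.length_take]; omega
    have := hget i h1 (by omega)
    simpa [List.get_eq_getElem, List.getElem_zip, List.getElem_tail] using this
  have hLg : ∀ i (hi : i < m + 3), (sl ++ sl.take 1)[i]'(by omega) = sl[i]'(by omega) :=
    fun i hi => List.getElem_append_left (by omega)
  have hLlast : (sl ++ sl.take 1)[m+3]'(by omega) = sl[0]'(by omega) := by
    rw [List.getElem_append_right (by omega)]
    simp [List.getElem_take, hm]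
  have hLmem : ∀ i (hi : i < m + 4), (sl ++ sl.take 1)[i]'(by omega) ∈ sl := by
    intro i hi
    rcases Nat.lt_or_ge i (m+3) with h' | h'
    · rw [hLg i h']; exact List.getElem_mem _
    · have : i = m + 3 := by omega
      subst this; rw [hLlast]; exact List.getElem_mem _
  obtain ⟨i, hi, rfl⟩ := List.mem_iff_getElem.1 hw
  rw [hm] at hi
  have hchg : ∀ k (hk : k + 1 < m + 4),
      Badj ((sl ++ sl.take 1)[k]'(by omega)) ((sl ++ sl.take 1)[k+1]'(by rw [hL1]; omega)) := by
    intro k hk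
    exact chain'_getElem hch k (by omega)
  rcases i with _ | j
  · -- w = sl[0]; edges m+2 and 0
    have e1 := hlink (m+2) (by omega)
    have e2 := hlink 0 (by omega)
    have b1 := hchg (m+2) (by omega)
    rw [hLlast] at e1 b1
    rw [hLg (m+2) (by omega)] at e1 b1
    rw [hLg 0 (by omega), hLg 1 (by omega)] at e2
    have b2 := hchg 0 (by omega)
    rw [hLg 0 (by omega), hLg 1 (by omega)] at b2
    refine ⟨zs[m+2]'(by omega), zs[0]'(by omega), ?_,
      ⟨e1.1, e1.2.2.symm, sl[m+2]'(by omega), hslS _ (List.getElem_mem _), b1.2.2.1, e1.2.1.symm⟩,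
      ⟨e2.1, e2.2.1, sl[1]'(by omega), hslS _ (List.getElem_mem _), b2.2.2.1.symm, e2.2.2⟩⟩
    intro hh
    rw [hzs.getElem_inj_iff] at hh
    omega
  · -- w = sl[j+1]; edges j and j+1
    have e1 := hlink j (by omega)
    have e2 := hlink (j+1) (by omega)
    have b2 := hchg (j+1) (by omega)
    rw [hLg j (by omega), hLg (j+1) (by omega)] at e1
    rw [hLg (j+1) (by omega)] at e2 b2
    have b1 := hchg j (by omega)
    rw [hLg j (by omega), hLg (j+1) (by omega)] at b1
    refine ⟨zs[j]'(by omega), zs[j+1]'(by omega), ?_,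
      ⟨e1.1, e1.2.2.symm, sl[j]'(by omega), hslS _ (List.getElem_mem _), b1.2.2.1, e1.2.1.symm⟩,
      ⟨e2.1, e2.2.1, (sl ++ sl.take 1)[j+2]'(by rw [hL1]; omega), hslS _ (hLmem (j+2) (by omega)),
        b2.2.2.1.symm, e2.2.2⟩⟩
    intro hh
    rw [hzs.getElem_inj_iff] at hh
    omega
lemma getElem_congr' {α} (l : List α) {a b : ℕ} (h : a = b) (ha : a < l.length) :
    l[a]'ha = l[b]'(h ▸ ha) := by subst h; rfl

lemma chain'_eraseIdx {α} {R : α → α → Prop} {l : List α} {i : ℕ} (hi : i + 2 < l.length)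
    (h : l.Chain' R) (hR : R (l[i]'(by omega)) (l[i+2]'hi)) : (l.eraseIdx (i+1)).Chain' R := by
  rw [List.eraseIdx_eq_take_drop_succ, List.Chain', List.isChain_append]
  refine ⟨List.IsChain.take h _, List.IsChain.drop h _, ?_⟩
  intro a ha b hb
  have hta : (l.take (i+1)).getLast? = some (l[i]'(by omega)) := by
    rw [List.getLast?_eq_getElem?]
    have hl : (l.take (i+1)).length = i + 1 := by simp [List.length_take]; omega
    rw [hl]
    simp only [Nat.add_sub_cancel, List.getElem?_take, if_pos (Nat.lt_succ_self i)]
    exact List.getElem?_eq_getElem _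
  have htb : (l.drop (i+2)).head? = some (l[i+2]'hi) := by
    rw [List.head?_drop]
    exact List.getElem?_eq_getElem _
  rw [hta] at ha
  rw [htb] at hb
  simp only [Option.mem_some_iff] at ha hb
  rw [← ha, ← hb]
  exact hR
lemma cleanse (x x' : Hex) (hx : isB x) (hxx' : x ≠ x') :
    ∀ N, ∀ p : List Hex, p.length ≤ N → IsPathB p → p.head? = some x' →
    (∀ h : 1 < p.length, (p[1]'h) ≠ x ∧ ¬ IsStar x' (p[1]'h) x) →
    ∃ q : List Hex, IsPathB q ∧ NoStar q ∧ (∀ w ∈ q, w ∈ p) ∧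
      q.head? = some x' ∧ q.getLast? = p.getLast? ∧
      (∀ h : 1 < q.length, (q[1]'h) ≠ x ∧ ¬ IsStar x' (q[1]'h) x) := by
  intro N
  induction N with
  | zero =>
    intro p hlen hp hhead hinv
    exact ⟨p, hp, by intro i hh; omega, fun w hw => hw, hhead, rfl, hinv⟩
  | succ N ih =>
    intro p hlen hp hhead hinv
    by_cases hns : NoStar p
    · exact ⟨p, hp, hns, fun w hw => hw, hhead, rfl, hinv⟩
    simp only [NoStar, not_forall, not_not] at hns
    obtain ⟨i, hi, hstar⟩ := hns
    obtain ⟨hB, hch, hnd⟩ := hp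
    have hp0 : p[0]'(by omega) = x' := by
      rw [List.head?_eq_getElem?, List.getElem?_eq_getElem (by omega)] at hhead
      exact Option.some_injective _ hhead
    have hx'B : isB x' := by rw [← hp0]; exact hB _ (List.getElem_mem _)
    set p' := p.eraseIdx (i+1) with hp'
    have hlen' : p'.length = p.length - 1 := by
      rw [hp', List.length_eraseIdx, if_pos (by omega)]
    have hpe : ∀ j (hj : j < p'.length), p'[j] = if h' : j < i + 1 then p[j]'(by omega) else p[j+1]'(by rw [hlen'] at hj; omega) := by
      intro j hj
      exact List.getElem_eraseIdx hj
    have hsub : ∀ w ∈ p', w ∈ p := fun w hw => (List.eraseIdx_sublist p (i+1)).mem hw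
    obtain ⟨hb1, hb2, hb3, c, hc, hc1, hc2, hc3⟩ := hstar
    have hpath' : IsPathB p' := by
      refine ⟨fun w hw => hB w (hsub w hw), ?_, (List.eraseIdx_sublist p (i+1)).nodup hnd⟩
      exact chain'_eraseIdx hi hch (Badj_symm hb3)
    have hhead' : p'.head? = some x' := by
      rw [List.head?_eq_getElem?, List.getElem?_eq_getElem (by rw [hlen']; omega)]
      rw [hpe 0 (by rw [hlen']; omega), dif_pos (by omega)]
      rw [hp0]
    have hlast' : p'.getLast? = p.getLast? := by
      have e1 : p'.getLast? = p'[p.length - 2]? := by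
        rw [List.getLast?_eq_getElem?]
        congr 1
        omega
      rw [e1, List.getElem?_eq_getElem (by rw [hlen']; omega),
        List.getLast?_eq_getElem?, List.getElem?_eq_getElem (by omega)]
      congr 1
      rw [hpe _ (by rw [hlen']; omega), dif_neg (by omega)]
      exact getElem_congr' p (by omega) _
    have hinv' : ∀ h : 1 < p'.length, (p'[1]'h) ≠ x ∧ ¬ IsStar x' (p'[1]'h) x := by
      intro h1
      rcases Nat.eq_zero_or_pos i with rfl | hipos
      · simp only [Nat.zero_add] at hb1 hb2 hb3 hc1 hc2 hc3 hi
        rw [hp0] at hb1 hb3 hc1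
        obtain ⟨hx1, hx2⟩ := hinv (by omega)
        have hpe1 : p'[1]'h1 = p[2]'(by omega) := by
          rw [hpe 1 h1, dif_neg (by omega)]
        rw [hpe1]
        constructor
        · intro hcon
          refine hx2 ⟨hb1, ⟨hB _ (List.getElem_mem _), hx, hx1, c, hc, hc2, hcon ▸ hc3.symm⟩,
            ⟨hx, hx'B, hxx', c, hc, hcon ▸ hc3, hc1.symm⟩, c, hc, hc1, hc2, hcon ▸ hc3⟩
        · rintro ⟨hd1, hd2, hd3, d, hd, he1, he2, he3⟩
          have hcd : c = d := by
            refine isLink_unique (a := x') (b := p[2]'(by omega)) ?_ hx'B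
              (hB _ (List.getElem_mem _)) ⟨hc, hc1, hc3.symm⟩ ⟨hd, he1, he2.symm⟩
            intro hcon
            rw [← hp0] at hcon
            rw [hnd.getElem_inj_iff] at hcon
            omega
          subst hcd
          exact hx2 ⟨hb1, ⟨hB _ (List.getElem_mem _), hx, hx1, c, hc, hc2, he3.symm⟩,
            ⟨hx, hx'B, hxx', c, hc, he3, hc1.symm⟩, c, hc, hc1, hc2, he3⟩
      · have hpe1 : p'[1]'h1 = p[1]'(by rw [hlen'] at h1; omega) := by
          rw [hpe 1 h1, dif_pos (by omega)]
        rw [hpe1]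
        exact hinv (by rw [hlen'] at h1; omega)
    obtain ⟨q, hq1, hq2, hq3, hq4, hq5, hq6⟩ := ih p' (by rw [hlen']; omega) hpath' hhead' hinv'
    exact ⟨q, hq1, hq2, fun w hw => hsub w (hq3 w hw), hq4, hq5.trans hlast', hq6⟩
lemma mem_of_getLast?' {α} {l : List α} {a : α} (h : l.getLast? = some a) : a ∈ l := by
  rw [List.getLast?_eq_getElem?] at h
  obtain ⟨hlt, hEq⟩ := List.getElem?_eq_some_iff.1 h
  exact hEq ▸ List.getElem_mem _

theorem spath_stable' (σ0 : Hex → Bool) (s : Bool) (l : List Hex) (hsp : IsSPath l)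
    (h2 : 2 ≤ l.length) (hsign : ∀ y ∈ l, σ0 y = s)
    (hc1 : ∃ sl : List Hex, IsSLoop sl ∧
      ∀ w ∈ sl, w ∈ partialCluster σ0 (l.get ⟨1, by have := h2; omega⟩) (l.get ⟨0, by have := h2; omega⟩))
    (hc2 : ∃ sl : List Hex, IsSLoop sl ∧
      ∀ w ∈ sl, w ∈ partialCluster σ0 (l.get ⟨l.length - 2, by have := h2; omega⟩)
        (l.get ⟨l.length - 1, by have := h2; omega⟩)) :
    ∀ n : ℕ, ∀ y ∈ l, evolve σ0 n y = s := by
  obtain ⟨sl1, hsl1, hin1⟩ := hc1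
  obtain ⟨sl2, hsl2, hin2⟩ := hc2
  have h3a : 3 ≤ sl1.length := hsl1.1.2.2.1
  have h3b : 3 ≤ sl2.length := hsl2.1.2.2.1
  obtain ⟨hlB, hlch, hlnd⟩ := hsp.1
  have hns_l : NoStar l := spath_noStar hsp
  simp only [List.get_eq_getElem] at hin1 hin2
  -- path to loop 1
  obtain ⟨p1, hp1path, hp1sign, hp1head, hp1last, hp1inv⟩ := hin1 _ (List.getElem_mem (by omega : 0 < sl1.length))
  obtain ⟨p2, hp2path, hp2sign, hp2head, hp2last, hp2inv⟩ := hin2 _ (List.getElem_mem (by omega : 0 < sl2.length))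
  simp only [List.get_eq_getElem] at hp1inv hp2inv
  have hne10 : l[1]'(by omega) ≠ l[0]'(by omega) := by
    intro hh; rw [hlnd.getElem_inj_iff] at hh; omega
  have hnem : (l[l.length - 2]'(by omega)) ≠ l[l.length - 1]'(by omega) := by
    intro hh; rw [hlnd.getElem_inj_iff] at hh; omega
  obtain ⟨q1, hq1path, hq1ns, hq1sub, hq1head, hq1last, hq1inv⟩ :=
    cleanse (l[1]'(by omega)) (l[0]'(by omega)) (hlB _ (List.getElem_mem _)) hne10
      p1.length p1 le_rfl hp1path hp1head hp1inv
  obtain ⟨q2, hq2path, hq2ns, hq2sub, hq2head, hq2last, hq2inv⟩ :=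
    cleanse (l[l.length - 2]'(by omega)) (l[l.length - 1]'(by omega))
      (hlB _ (List.getElem_mem _)) hnem p2.length p2 le_rfl hp2path hp2head hp2inv
  rw [hp1last] at hq1last
  rw [hp2last] at hq2last
  set S : Set Hex := {v | v ∈ l ∨ v ∈ sl1 ∨ v ∈ sl2 ∨ v ∈ q1 ∨ v ∈ q2} with hS
  have hsl1S : ∀ w ∈ sl1, w ∈ S := fun w hw => Or.inr (Or.inl hw)
  have hsl2S : ∀ w ∈ sl2, w ∈ S := fun w hw => Or.inr (Or.inr (Or.inl hw))
  have hq1S : ∀ w ∈ q1, w ∈ S := fun w hw => Or.inr (Or.inr (Or.inr (Or.inl hw)))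
  have hq2S : ∀ w ∈ q2, w ∈ S := fun w hw => Or.inr (Or.inr (Or.inr (Or.inr hw)))
  have hlS : ∀ w ∈ l, w ∈ S := fun w hw => Or.inl hw
  -- signs
  have hsign1 : ∀ w ∈ sl1, σ0 w = s := by
    intro w hw
    obtain ⟨pw, hpw, hsw, hhw, hlw, -⟩ := hin1 w hw
    rw [hsw w (mem_of_getLast?' hlw)]
    exact hsign _ (List.getElem_mem _)
  have hsign2 : ∀ w ∈ sl2, σ0 w = s := by
    intro w hw
    obtain ⟨pw, hpw, hsw, hhw, hlw, -⟩ := hin2 w hw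
    rw [hsw w (mem_of_getLast?' hlw)]
    exact hsign _ (List.getElem_mem _)
  have hsignq1 : ∀ w ∈ q1, σ0 w = s := by
    intro w hw
    rw [hp1sign w (hq1sub w hw)]
    exact hsign _ (List.getElem_mem _)
  have hsignq2 : ∀ w ∈ q2, σ0 w = s := by
    intro w hw
    rw [hp2sign w (hq2sub w hw)]
    exact hsign _ (List.getElem_mem _)
  -- endpoint certificates
  have certY0 : ∃ z1 z2, z1 ≠ z2 ∧ Cert S (l[0]'(by omega)) z1 ∧ Cert S (l[0]'(by omega)) z2 := by
    have hq1len : 0 < q1.length := by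
      cases q1 with
      | nil => simp at hq1head
      | cons a t => simp
    rcases Nat.lt_or_ge q1.length 2 with hlt | hge
    · have hsame : q1.getLast? = q1.head? := by
        rw [List.getLast?_eq_getElem?, List.head?_eq_getElem?]
        congr 1
        omega
      rw [hsame, hq1head] at hq1last
      have h0w : l[0]'(by omega) = sl1[0]'(by omega) := Option.some_injective _ hq1last
      exact loop_cert hsl1 hsl1S (h0w ▸ List.getElem_mem _)
    · have hb01 : Badj (l[0]'(by omega)) (l[1]'(by omega)) := chain'_getElem hlch 0 (by omega)
      exact endpoint_cert (hlB _ (List.getElem_mem _)) (hlB _ (List.getElem_mem _)) hne10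
        hb01 (hlS _ (List.getElem_mem _)) hq1path hq1head hq1inv hq1S hge
  have certYm : ∃ z1 z2, z1 ≠ z2 ∧ Cert S (l[l.length - 1]'(by omega)) z1 ∧
      Cert S (l[l.length - 1]'(by omega)) z2 := by
    have hq2len : 0 < q2.length := by
      cases q2 with
      | nil => simp at hq2head
      | cons a t => simp
    rcases Nat.lt_or_ge q2.length 2 with hlt | hge
    · have hsame : q2.getLast? = q2.head? := by
        rw [List.getLast?_eq_getElem?, List.head?_eq_getElem?]
        congr 1
        omega
      rw [hsame, hq2head] at hq2last
      have h0w : l[l.length - 1]'(by omega) = sl2[0]'(by omega) := Option.some_injective _ hq2last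
      exact loop_cert hsl2 hsl2S (h0w ▸ List.getElem_mem _)
    · have hbm : Badj (l[l.length - 1]'(by omega)) (l[l.length - 2]'(by omega)) := by
        have := chain'_getElem hlch (l.length - 2) (by omega)
        have e : l[(l.length - 2) + 1]'(by omega) = l[l.length - 1]'(by omega) :=
          getElem_congr' l (by omega) _
        rw [e] at this
        exact Badj_symm this
      exact endpoint_cert (hlB _ (List.getElem_mem _)) (hlB _ (List.getElem_mem _)) hnem
        hbm (hlS _ (List.getElem_mem _)) hq2path hq2head hq2inv hq2S hge
  -- certificates for path-type lists q1/q2 (generic helper inline)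
  have qcert : ∀ (q : List Hex) (w1 : Hex), IsPathB q → NoStar q → (∀ v ∈ q, v ∈ S) →
      q.head? = some (l[0]'(by omega)) ∨ q.head? = some (l[l.length - 1]'(by omega)) →
      (∃ u, q.getLast? = some u ∧ (u ∈ sl1 ∨ u ∈ sl2)) →
      ∀ y ∈ q, ∃ z1 z2, z1 ≠ z2 ∧ Cert S y z1 ∧ Cert S y z2 := by
    intro q w1 hqp hqns hqS hqh hql y hy
    obtain ⟨i, hiq, rfl⟩ := List.mem_iff_getElem.1 hy
    rcases Nat.eq_zero_or_pos i with rfl | hipos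
    · -- head
      have hq0 : ∀ v, q.head? = some v → q[0]'hiq = v := by
        intro v hv
        rw [List.head?_eq_getElem?, List.getElem?_eq_getElem hiq] at hv
        exact Option.some_injective _ hv
      rcases hqh with hqh | hqh
      · rw [hq0 _ hqh]; exact certY0
      · rw [hq0 _ hqh]; exact certYm
    rcases Nat.lt_or_ge i (q.length - 1) with hilt | hige
    · -- interior
      obtain ⟨j, rfl⟩ : ∃ j, i = j + 1 := ⟨i - 1, by omega⟩
      exact path_cert_interior hqp hqns hqS (by omega)
    · -- last
      obtain ⟨u, hu1, hu2⟩ := hql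
      have : q[i] = u := by
        rw [List.getLast?_eq_getElem?, List.getElem?_eq_getElem (by omega)] at hu1
        have := Option.some_injective _ hu1
        rw [← this]
        exact getElem_congr' q (by omega) _
      rw [this]
      rcases hu2 with hu2 | hu2
      · exact loop_cert hsl1 hsl1S hu2
      · exact loop_cert hsl2 hsl2S hu2
  have hstable : StableSet σ0 s S := by
    constructor
    · rintro y (hy | hy | hy | hy | hy)
      · exact ⟨hlB y hy, hsign y hy⟩
      · exact ⟨hsl1.1.1 y hy, hsign1 y hy⟩
      · exact ⟨hsl2.1.1 y hy, hsign2 y hy⟩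
      · exact ⟨hq1path.1 y hy, hsignq1 y hy⟩
      · exact ⟨hq2path.1 y hy, hsignq2 y hy⟩
    · rintro y (hy | hy | hy | hy | hy)
      · obtain ⟨i, hiq, rfl⟩ := List.mem_iff_getElem.1 hy
        rcases Nat.eq_zero_or_pos i with rfl | hipos
        · exact certY0
        rcases Nat.lt_or_ge i (l.length - 1) with hilt | hige
        · obtain ⟨j, rfl⟩ : ∃ j, i = j + 1 := ⟨i - 1, by omega⟩
          exact path_cert_interior ⟨hlB, hlch, hlnd⟩ hns_l hlS (by omega)
        · have : l[i] = l[l.length - 1]'(by omega) := getElem_congr' l (by omega) _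
          rw [this]
          exact certYm
      · exact loop_cert hsl1 hsl1S hy
      · exact loop_cert hsl2 hsl2S hy
      · refine qcert q1 (sl1[0]'(by omega)) hq1path hq1ns hq1S (Or.inl hq1head)
          ⟨sl1[0]'(by omega), hq1last, Or.inl (List.getElem_mem _)⟩ _ hy
      · refine qcert q2 (sl2[0]'(by omega)) hq2path hq2ns hq2S (Or.inr hq2head)
          ⟨sl2[0]'(by omega), hq2last, Or.inr (List.getElem_mem _)⟩ _ hy
  intro n y hy
  exact stable_evolve hstable n y (hlS y hy)

/-- an s-path of constant initial sign whose two end partial clusters both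
contain s-loops is stable: every site keeps its sign at all times. -/
theorem spath_stable (σ0 : Hex → Bool) (s : Bool) (l : List Hex) (hsp : IsSPath l)
    (h2 : 2 ≤ l.length) (hsign : ∀ y ∈ l, σ0 y = s)
    (hc1 : ∃ sl : List Hex, IsSLoop sl ∧
      ∀ w ∈ sl, w ∈ partialCluster σ0 (l.get ⟨1, by omega⟩) (l.get ⟨0, by omega⟩))
    (hc2 : ∃ sl : List Hex, IsSLoop sl ∧
      ∀ w ∈ sl, w ∈ partialCluster σ0 (l.get ⟨l.length - 2, by omega⟩)
        (l.get ⟨l.length - 1, by omega⟩)) :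
    ∀ n : ℕ, ∀ y ∈ l, evolve σ0 n y = s := by
  exact spath_stable' σ0 s l hsp h2 hsign hc1 hc2
end

section
/- The triangular lattice B can be partitioned into pairwise disjoint antistars (triangles without a common A-neighbor). -/
open MeasureTheory

section Aux

lemma hexAdj_BA (a b k l : ℤ) :
    HexGraph.Adj (a, b, true) (k, l, false) ↔
      (a = k ∧ b = l) ∨ (a = k - 1 ∧ b = l) ∨ (a = k ∧ b = l - 1) := by
  simp [HexGraph, SimpleGraph.fromRel_adj, hexRel, Prod.ext_iff]

lemma hexAdj_AB (a b k l : ℤ) :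
    HexGraph.Adj (k, l, false) (a, b, true) ↔
      (a = k ∧ b = l) ∨ (a = k - 1 ∧ b = l) ∨ (a = k ∧ b = l - 1) := by
  rw [SimpleGraph.adj_comm]; exact hexAdj_BA a b k l

lemma badj_of (a b c d k l : ℤ)
    (h1 : (a = k ∧ b = l) ∨ (a = k - 1 ∧ b = l) ∨ (a = k ∧ b = l - 1))
    (h2 : (c = k ∧ d = l) ∨ (c = k - 1 ∧ d = l) ∨ (c = k ∧ d = l - 1))
    (hne : ¬(a = c ∧ b = d)) :
    Badj (a, b, true) (c, d, true) := by
  refine ⟨rfl, rfl, ?_, (k, l, false), rfl, (hexAdj_BA a b k l).2 h1,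
    (hexAdj_AB c d k l).2 h2⟩
  simp [Prod.ext_iff]; tauto

/-- The antistar with lower-left corner `p`. -/
def triA (p : ℤ × ℤ) : Finset Hex :=
  {(p.1, p.2, true), (p.1 + 1, p.2, true), (p.1, p.2 + 1, true)}

lemma triA_antistar (p : ℤ × ℤ) : IsAntistarSet (triA p) := by
  obtain ⟨i, j⟩ := p
  refine ⟨(i, j, true), (i + 1, j, true), (i, j + 1, true), rfl, ?_, ?_, ?_, ?_⟩
  · exact badj_of i j (i+1) j (i+1) j (by omega) (by omega) (by omega)
  · exact badj_of (i+1) j i (j+1) (i+1) (j+1) (by omega) (by omega) (by omega)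
  · exact badj_of i (j+1) i j i (j+1) (by omega) (by omega) (by omega)
  · rintro ⟨⟨k, l, s⟩, hz, h1, h2, h3⟩
    have hs : s = false := hz
    subst hs
    rw [hexAdj_BA] at h1 h2 h3
    omega

end Aux
/-- the triangular sublattice `B` can be partitioned into pairwise disjoint
antistars. -/
theorem antistar_partition :
    ∃ Part : Set (Finset Hex), (∀ t ∈ Part, IsAntistarSet t) ∧
      ∀ v : Hex, isB v → ∃! t : Finset Hex, t ∈ Part ∧ v ∈ t := by
  refine ⟨{t | ∃ p : ℤ × ℤ, (p.1 - p.2) % 3 = 0 ∧ t = triA p}, ?_, ?_⟩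
  · rintro t ⟨p, -, rfl⟩; exact triA_antistar p
  · rintro ⟨i, j, s⟩ hv
    have hs : s = true := hv
    subst hs
    have key : ∀ q : ℤ × ℤ, ((i, j, true) : Hex) ∈ triA q ↔
        (i = q.1 ∧ j = q.2) ∨ (i = q.1 + 1 ∧ j = q.2) ∨ (i = q.1 ∧ j = q.2 + 1) := by
      intro q
      simp [triA, Prod.ext_iff]
    obtain ⟨p, hp0, hpm⟩ : ∃ p : ℤ × ℤ, (p.1 - p.2) % 3 = 0 ∧
        ((i = p.1 ∧ j = p.2) ∨ (i = p.1 + 1 ∧ j = p.2) ∨ (i = p.1 ∧ j = p.2 + 1)) := by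
      have h : (i - j) % 3 = 0 ∨ (i - j) % 3 = 1 ∨ (i - j) % 3 = 2 := by omega
      rcases h with h | h | h
      · exact ⟨(i, j), by omega, by omega⟩
      · exact ⟨(i - 1, j), by omega, by omega⟩
      · exact ⟨(i, j - 1), by omega, by omega⟩
    refine ⟨triA p, ⟨⟨p, hp0, rfl⟩, (key p).2 hpm⟩, ?_⟩
    rintro t ⟨⟨q, hq0, rfl⟩, hvq⟩
    rw [key q] at hvq
    have hqp : q = p := by
      obtain ⟨a, b⟩ := p; obtain ⟨c, d⟩ := q
      simp only [Prod.mk.injEq]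
      simp only at hp0 hq0 hpm hvq
      omega
    rw [hqp]
end

section
/- The deterministic cellular automaton on the triangular lattice T in which a spin flips iff at least two of its three designated neighbor-pairs are monochromatic of the opposite sign is equivalent to the alternating-sublattice zero-temperature majority dynamics on an associated hexagonal lattice H' restricted to the sublattice B' = T at even times: for all m >= 0, the automaton state at time m equals the H'-dynamics state on B' at time 2m. -/
open MeasureTheory

lemma key_updBA (σ : Hex → Bool) (p : ℤ × ℤ) :
    updB (updA σ) (p.1, p.2, true) = autoStep (fun q => σ (q.1, q.2, true)) p := by
  obtain ⟨i, j⟩ := p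
  simp only [updB, updA, majAt, autoStep, nbrsT]
  norm_num
  ring_nf
  generalize σ (i, j, true) = v
  generalize σ (-1 + i, j, true) = a
  generalize σ (i, -1 + j, true) = b
  generalize σ (1 + i, j, true) = c
  generalize σ (1 + i, -1 + j, true) = d
  generalize σ (-1 + i, 1 + j, true) = e
  generalize σ (i, 1 + j, true) = f
  cases v <;> cases a <;> cases b <;> cases c <;> cases d <;> cases e <;> cases f <;> rfl

/-- the cellular automaton on the triangular lattice equals the
alternating-sublattice hexagonal dynamics restricted to `B` at even times:
the automaton state at time `m` equals the `H`-dynamics state on `B` at time `2m`. -/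
theorem automaton_eq_hex_dynamics (τ0 : ℤ × ℤ → Bool) (σ0 : Hex → Bool)
    (hinit : ∀ p : ℤ × ℤ, σ0 (p.1, p.2, true) = τ0 p) :
    ∀ m : ℕ, ∀ p : ℤ × ℤ, autoEvolve τ0 m p = evolve σ0 (2 * m) (p.1, p.2, true) := by
  intro m
  induction m with
  | zero => intro p; simpa [autoEvolve, evolve] using (hinit p).symm
  | succ m ih =>
    intro p
    have hfun : autoEvolve τ0 m = fun q : ℤ × ℤ => evolve σ0 (2 * m) (q.1, q.2, true) :=
      funext fun q => ih q
    have hev : evolve σ0 (2 * (m + 1)) = updB (updA (evolve σ0 (2 * m))) := by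
      have h2 : 2 * (m + 1) = (2 * m + 1) + 1 := by ring
      have e1 : ((2 * m + 1) + 1) % 2 = 0 := by omega
      have e2 : (2 * m + 1) % 2 = 1 := by omega
      rw [h2]
      show (if ((2 * m + 1) + 1) % 2 = 1 then updA (evolve σ0 (2 * m + 1))
        else updB (evolve σ0 (2 * m + 1))) = _
      rw [e1]
      norm_num
      have h3 : evolve σ0 (2 * m + 1) = updA (evolve σ0 (2 * m)) := by
        show (if (2 * m + 1) % 2 = 1 then updA (evolve σ0 (2 * m))
          else updB (evolve σ0 (2 * m))) = _
        rw [if_pos e2]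
      rw [h3]
    rw [hev]
    show autoStep (autoEvolve τ0 m) p = _
    rw [hfun, ← key_updBA]
end
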